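/- arXiv:2308.00668 — 9 statements merged into one kernel-verified Lean document; each statement's English description precedes it below -/
import Mathlib

section
/- Let N > 2 be an integer, let δ, φ ∈ ℤ/Nℤ, and let G be a subgroup of GL(2, ℤ/Nℤ). Suppose that G contains c₁ = [[−1,0],[φ,1]], or that φ = 0 and G contains c_ε = [[−ε,0],[0,ε]] for some ε ∈ {1,−1}. If G also contains a matrix c_{δ,φ}(a,b) = [[a+bφ, b],[δb, a]] for some a, b ∈ ℤ/Nℤ with b a unit of ℤ/Nℤ, then G is not abelian. -/
/-- The matrix `c_{δ,φ}(a,b) = [[a+bφ, b],[δb, a]]` over `ℤ/Nℤ`. -/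
def cMat (N : ℕ) (δ φ a b : ZMod N) : Matrix (Fin 2) (Fin 2) (ZMod N) :=
  !![a + b * φ, b; δ * b, a]

theorem nonabelian_of_c1_and_unit_cartan (N : ℕ) (hN : 2 < N) (δ φ : ZMod N)
    (G : Subgroup (GL (Fin 2) (ZMod N)))
    (h1 : (∃ g ∈ G, (g : Matrix (Fin 2) (Fin 2) (ZMod N)) = !![-1, 0; φ, 1]) ∨
      (φ = 0 ∧ ∃ ε : ZMod N, (ε = 1 ∨ ε = -1) ∧
        ∃ g ∈ G, (g : Matrix (Fin 2) (Fin 2) (ZMod N)) = !![-ε, 0; 0, ε]))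
    (h2 : ∃ a b : ZMod N, IsUnit b ∧
      ∃ g ∈ G, (g : Matrix (Fin 2) (Fin 2) (ZMod N)) = cMat N δ φ a b) :
    ¬ (∀ x ∈ G, ∀ y ∈ G, x * y = y * x) := by
  intro hab
  obtain ⟨a, b, hb, c, hcG, hcval⟩ := h2
  have h2ne : (2 : ZMod N) ≠ 0 := by
    have : ((2 : ℕ) : ZMod N) ≠ 0 := by
      rw [Ne, ZMod.natCast_eq_zero_iff]
      intro h
      have := Nat.le_of_dvd (by norm_num) h
      omega
    simpa using this
  have hbb : b + b ≠ 0 := by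
    intro h
    have h2b : (2 : ZMod N) * b = 0 * b := by ring_nf; linear_combination h
    exact h2ne (hb.mul_right_cancel h2b)
  rcases h1 with ⟨g, hgG, hgval⟩ | ⟨hφ, ε, hε, g, hgG, hgval⟩
  · have key := hab g hgG c hcG
    have key2 : ((g : Matrix (Fin 2) (Fin 2) (ZMod N)) * c) 0 1
        = ((c : Matrix (Fin 2) (Fin 2) (ZMod N)) * g) 0 1 := by
      rw [← Matrix.GeneralLinearGroup.coe_mul, ← Matrix.GeneralLinearGroup.coe_mul, key]
    rw [hgval, hcval] at key2
    simp [cMat, Matrix.mul_apply, Fin.sum_univ_succ] at key2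
    apply hbb
    linear_combination -key2
  · have hε1 : IsUnit ε := by
      rcases hε with h | h <;> simp [h]
    have key := hab g hgG c hcG
    have key2 : ((g : Matrix (Fin 2) (Fin 2) (ZMod N)) * c) 0 1
        = ((c : Matrix (Fin 2) (Fin 2) (ZMod N)) * g) 0 1 := by
      rw [← Matrix.GeneralLinearGroup.coe_mul, ← Matrix.GeneralLinearGroup.coe_mul, key]
    rw [hgval, hcval] at key2
    simp [cMat, Matrix.mul_apply, Fin.sum_univ_succ, hφ] at key2
    -- key2 : -ε * b = b * ε  (or similar)
    have : ε * (b + b) = ε * 0 := by linear_combination -key2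
    have := hε1.mul_left_cancel this
    exact hbb (by simpa using this)
end

section
/- Let N ≥ 2 be an integer, let δ, φ ∈ ℤ, let p be a prime and e ≥ 1 an integer with p^e dividing N. Then the reduction-mod-p^e map GL(2, ℤ/Nℤ) → GL(2, ℤ/p^eℤ) maps the subgroup N_{δ,φ}(N) (formed with δ, φ reduced mod N) surjectively onto the subgroup N_{δ,φ}(p^e) (formed with δ, φ reduced mod p^e). -/
/-- The Cartan subgroup `C_{δ,φ}(N)` as a subset of `GL(2, ℤ/Nℤ)`. -/
def cartanSet (N : ℕ) (δ φ : ZMod N) : Set (GL (Fin 2) (ZMod N)) :=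
  {g | ∃ a b : ZMod N, (g : Matrix (Fin 2) (Fin 2) (ZMod N)) = cMat N δ φ a b}

/-- The group `N_{δ,φ}(N)`, generated by the Cartan subgroup together with
`c₁ = [[−1,0],[φ,1]]`. -/
def normalizerGroup (N : ℕ) (δ φ : ZMod N) : Subgroup (GL (Fin 2) (ZMod N)) :=
  Subgroup.closure (cartanSet N δ φ ∪
    {g | (g : Matrix (Fin 2) (Fin 2) (ZMod N)) = !![-1, 0; φ, 1]})

private lemma isUnit_intCast_zmod_aux (N : ℕ) (d : ℤ)
    (h : ∀ q : ℕ, q.Prime → q ∣ N → ¬ ((q : ℤ) ∣ d)) : IsUnit (d : ZMod N) := by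
  have hg : Int.gcd d N = 1 := by
    by_contra hg
    obtain ⟨q, hq, hqd⟩ := Nat.exists_prime_and_dvd hg
    refine h q hq ?_ (dvd_trans (Int.natCast_dvd_natCast.mpr hqd) (Int.gcd_dvd_left _ _))
    exact_mod_cast dvd_trans (Int.natCast_dvd_natCast.mpr hqd) (Int.gcd_dvd_right _ _)
  obtain ⟨u, v, huv⟩ := Int.isCoprime_iff_gcd_eq_one.mpr hg
  have : (u : ZMod N) * (d : ZMod N) = 1 := by
    have := congrArg (Int.cast : ℤ → ZMod N) huv
    push_cast at this
    simpa [ZMod.natCast_self] using this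
  exact isUnit_iff_exists_inv.mpr ⟨u, mul_comm (u : ZMod N) (d : ZMod N) ▸ this⟩

theorem normalizer_reduction_surjective (N : ℕ) (hN : 2 ≤ N) (δ φ : ℤ)
    (p : ℕ) (hp : p.Prime) (e : ℕ) (he : 1 ≤ e) (hdvd : p ^ e ∣ N) :
    Subgroup.map (Matrix.GeneralLinearGroup.map (ZMod.castHom hdvd (ZMod (p ^ e))))
        (normalizerGroup N (δ : ZMod N) (φ : ZMod N)) =
      normalizerGroup (p ^ e) (δ : ZMod (p ^ e)) (φ : ZMod (p ^ e)) := by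
  classical
  have hN0 : N ≠ 0 := by omega
  have hpe0 : p ^ e ≠ 0 := pow_ne_zero e hp.pos.ne'
  haveI : NeZero (p ^ e) := ⟨hpe0⟩
  haveI : Fact p.Prime := ⟨hp⟩
  set f := ZMod.castHom hdvd (ZMod (p ^ e)) with hf
  unfold normalizerGroup
  rw [MonoidHom.map_closure]
  congr 1
  ext g
  simp only [Set.mem_image, Set.mem_union, Set.mem_setOf_eq, cartanSet]
  constructor
  · rintro ⟨g', (⟨a, b, hab⟩ | hc), rfl⟩
    · left
      refine ⟨f a, f b, ?_⟩
      show (g' : Matrix (Fin 2) (Fin 2) (ZMod N)).map f = _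
      rw [hab]
      unfold cMat
      ext i j
      fin_cases i <;> fin_cases j <;> simp
    · right
      show (g' : Matrix (Fin 2) (Fin 2) (ZMod N)).map f = _
      rw [hc]
      ext i j
      fin_cases i <;> fin_cases j <;> simp
  · rintro (⟨a₀, b₀, hab⟩ | hc)
    · -- lift of a Cartan element
      have hdet : IsUnit (a₀ * a₀ + a₀ * b₀ * ((φ : ZMod (p ^ e)))
          - (δ : ZMod (p ^ e)) * (b₀ * b₀)) := by
        have hu := (Matrix.isUnit_iff_isUnit_det _).mp g.isUnit
        rw [hab] at hu
        unfold cMat at hu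
        rw [Matrix.det_fin_two_of] at hu
        convert hu using 1
        ring
      set m := ordCompl[p] N with hm
      have hcop : (p ^ e).Coprime m := Nat.Coprime.pow_left _ (Nat.coprime_ordCompl hp hN0)
      obtain ⟨a, ha1, ha2⟩ := Nat.chineseRemainder hcop a₀.val 1
      obtain ⟨b, hb1, hb2⟩ := Nat.chineseRemainder hcop b₀.val 0
      have hae : ((a : ℕ) : ZMod (p ^ e)) = a₀ := by
        rw [ZMod.natCast_eq_natCast_iff _ _ _ |>.mpr ha1, ZMod.natCast_val, ZMod.cast_id]
      have hbe : ((b : ℕ) : ZMod (p ^ e)) = b₀ := by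
        rw [ZMod.natCast_eq_natCast_iff _ _ _ |>.mpr hb1, ZMod.natCast_val, ZMod.cast_id]
      set d : ℤ := (a : ℤ) * a + a * b * φ - δ * (b * b) with hd
      have hd_pe : ((d : ZMod (p ^ e))) = a₀ * a₀ + a₀ * b₀ * ((φ : ZMod (p ^ e)))
          - (δ : ZMod (p ^ e)) * (b₀ * b₀) := by
        rw [hd]
        push_cast
        rw [hae, hbe]
      have hunit_pe : IsUnit ((d : ZMod (p ^ e))) := hd_pe ▸ hdet
      have hdN : IsUnit ((d : ZMod N)) := by
        refine isUnit_intCast_zmod_aux N d ?_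
        intro q hq hqN hqd
        haveI : Fact q.Prime := ⟨hq⟩
        by_cases hqp : q = p
        · subst hqp
          have h0 : ((d : ZMod q)) = 0 := (ZMod.intCast_zmod_eq_zero_iff_dvd _ _).mpr hqd
          have : IsUnit ((d : ZMod q)) := by
            have := hunit_pe.map (ZMod.castHom (dvd_pow_self q (by omega : e ≠ 0)) (ZMod q))
            rwa [map_intCast] at this
          rw [h0] at this
          exact not_isUnit_zero this
        · have hqm : q ∣ m := by
            have h1 : q ∣ ordProj[p] N * m := by
              rw [hm, Nat.ordProj_mul_ordCompl_eq_self]; exact hqN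
            rcases (Nat.Prime.dvd_mul hq).mp h1 with h2 | h2
            · exact absurd ((Nat.prime_dvd_prime_iff_eq hq hp).mp (hq.dvd_of_dvd_pow h2)) hqp
            · exact h2
          have haq : ((a : ℕ) : ZMod q) = 1 := by
            rw [ZMod.natCast_eq_natCast_iff _ _ _ |>.mpr (ha2.of_dvd hqm)]; simp
          have hbq : ((b : ℕ) : ZMod q) = 0 := by
            rw [ZMod.natCast_eq_natCast_iff _ _ _ |>.mpr (hb2.of_dvd hqm)]; simp
          have h0 : ((d : ZMod q)) = 0 := (ZMod.intCast_zmod_eq_zero_iff_dvd _ _).mpr hqd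
          rw [hd] at h0
          push_cast at h0
          rw [haq, hbq] at h0
          simp at h0
      set M : Matrix (Fin 2) (Fin 2) (ZMod N) :=
        cMat N (δ : ZMod N) (φ : ZMod N) ((a : ℕ) : ZMod N) ((b : ℕ) : ZMod N) with hM
      have hMdet : IsUnit M.det := by
        rw [hM]
        unfold cMat
        rw [Matrix.det_fin_two_of]
        convert hdN using 1
        rw [hd]
        push_cast
        ring
      have hu : IsUnit M := (Matrix.isUnit_iff_isUnit_det _).mpr hMdet
      refine ⟨hu.unit, Or.inl ⟨((a : ℕ) : ZMod N), ((b : ℕ) : ZMod N), hu.unit_spec⟩, ?_⟩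
      apply Units.ext
      show M.map f = (g : Matrix (Fin 2) (Fin 2) (ZMod (p ^ e)))
      rw [hab, hM]
      unfold cMat
      ext i j
      fin_cases i <;> fin_cases j <;>
        simp [map_natCast, hae, hbe]
    · -- lift of c₁
      have hu : IsUnit (!![-1, 0; (φ : ZMod N), 1] : Matrix (Fin 2) (Fin 2) (ZMod N)) := by
        rw [Matrix.isUnit_iff_isUnit_det, Matrix.det_fin_two_of]
        simp
      refine ⟨hu.unit, Or.inr hu.unit_spec, ?_⟩
      apply Units.ext
      show (!![-1, 0; (φ : ZMod N), 1] : Matrix (Fin 2) (Fin 2) (ZMod N)).map f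
          = (g : Matrix (Fin 2) (Fin 2) (ZMod (p ^ e)))
      rw [hc]
      ext i j
      fin_cases i <;> fin_cases j <;> simp
end

section
/- Let N ≥ 2 be an integer and let δ, φ ∈ ℤ. The group N_{δ,φ}(N) ⊆ GL(2, ℤ/Nℤ) (formed with δ, φ reduced mod N) is abelian if and only if N = 2 and either φ ≡ 0 (mod 2), or δ ≡ 0 (mod 2) and φ ≡ 1 (mod 2). Moreover, whenever N_{δ,φ}(2) is abelian, it is isomorphic to ℤ/2ℤ. -/
lemma unit_of_map_ne_zero {p v : ℕ} (hp : p.Prime) (hv : v ≠ 0) (x : ZMod (p^v))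
    (h : (ZMod.castHom (dvd_pow_self p hv) (ZMod p)) x ≠ 0) : IsUnit x := by
  haveI : NeZero (p^v) := ⟨pow_ne_zero v hp.pos.ne'⟩
  obtain ⟨n, rfl⟩ : ∃ n : ℕ, (n : ZMod (p^v)) = x := ⟨x.val, ZMod.natCast_rightInverse x⟩
  rw [map_natCast] at h
  rw [ZMod.isUnit_iff_coprime]
  exact Nat.Coprime.pow_right _ ((hp.coprime_iff_not_dvd).mpr
    (fun hd => h ((ZMod.natCast_eq_zero_iff n p).mpr hd))).symm

lemma isUnit_pair {α β : Type*} [Monoid α] [Monoid β] {x : α} {y : β}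
    (hx : IsUnit x) (hy : IsUnit y) : IsUnit ((x, y) : α × β) := by
  obtain ⟨u, rfl⟩ := hx
  obtain ⟨w, rfl⟩ := hy
  exact ⟨⟨(↑u, ↑w), (↑u⁻¹, ↑w⁻¹), by ext <;> simp, by ext <;> simp⟩, rfl⟩

lemma lemA : ∀ q : ℕ, Odd q → ∀ δ φ : ZMod q, ∃ a : ZMod q, IsUnit (a * a + a * φ - δ) := by
  intro q
  induction q using Nat.strong_induction_on with
  | _ q IH =>
    intro hq δ φ
    have hq0 : q ≠ 0 := by rintro rfl; simp [Nat.odd_iff] at hq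
    rcases eq_or_ne q 1 with rfl | hq1
    · exact ⟨0, by rw [Subsingleton.elim (0*0+0*φ-δ) 1]; exact isUnit_one⟩
    have hfact : ∃ p v m, p.Prime ∧ p ≠ 2 ∧ v ≠ 0 ∧ Nat.Coprime (p^v) m ∧ m < q ∧ Odd m ∧
        q = p ^ v * m := by
      refine ⟨q.minFac, q.factorization q.minFac, ordCompl[q.minFac] q,
        Nat.minFac_prime hq1, ?_, ?_, ?_, ?_, ?_, (Nat.ordProj_mul_ordCompl_eq_self q _).symm⟩
      · intro h2
        rw [Nat.odd_iff] at hq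
        have := Nat.minFac_dvd q
        rw [h2] at this
        omega
      · exact ((Nat.minFac_prime hq1).factorization_pos_of_dvd hq0 (Nat.minFac_dvd q)).ne'
      · exact (Nat.coprime_ordCompl (Nat.minFac_prime hq1) hq0).pow_left _
      · have hle := Nat.le_of_dvd (by omega) (Nat.ordCompl_dvd q q.minFac)
        rcases hle.lt_or_eq with h | h
        · exact h
        · exfalso
          have hqm := Nat.ordProj_mul_ordCompl_eq_self q q.minFac
          rw [h] at hqm
          have h2 : 2 ≤ q.minFac := (Nat.minFac_prime hq1).two_le
          have hv0 : q.factorization q.minFac ≠ 0 :=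
            ((Nat.minFac_prime hq1).factorization_pos_of_dvd hq0 (Nat.minFac_dvd q)).ne'
          have : 2 ≤ q.minFac ^ q.factorization q.minFac :=
            h2.trans (Nat.le_self_pow hv0 _)
          nlinarith [Nat.pos_of_ne_zero hq0]
      · have hdvd := Nat.ordCompl_dvd q q.minFac
        rw [Nat.odd_iff] at hq ⊢
        rcases Nat.even_or_odd (ordCompl[q.minFac] q) with he | ho
        · exfalso
          have h2q : 2 ∣ q := (he.two_dvd).trans hdvd
          omega
        · exact Nat.odd_iff.mp ho
    obtain ⟨p, v, m, hp, hpodd, hv0, hco, hmlt, hmodd, rfl⟩ := hfact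
    set e := ZMod.chineseRemainder hco with he
    obtain ⟨a₂, ha₂⟩ := IH m hmlt hmodd (e δ).2 (e φ).2
    have hkey : ∃ a₁ : ZMod (p^v), IsUnit (a₁ * a₁ + a₁ * (e φ).1 - (e δ).1) := by
      by_contra hno
      push_neg at hno
      set g := ZMod.castHom (dvd_pow_self p hv0) (ZMod p) with hg
      have hval : ∀ a₁ : ZMod (p^v), g (a₁ * a₁ + a₁ * (e φ).1 - (e δ).1) = 0 := by
        intro a₁
        by_contra hne
        exact hno a₁ (unit_of_map_ne_zero hp hv0 _ hne)
      have h0 := hval 0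
      have h1 := hval 1
      have h2 := hval 2
      simp only [map_add, map_sub, map_mul, map_one, map_ofNat, map_zero] at h0 h1 h2
      have h2ne : (2 : ZMod p) ≠ 0 := by
        intro hh
        have : ((2:ℕ) : ZMod p) = 0 := by exact_mod_cast hh
        rw [ZMod.natCast_eq_zero_iff] at this
        have := (Nat.prime_dvd_prime_iff_eq hp Nat.prime_two).mp this
        exact hpodd this
      apply h2ne
      linear_combination h2 - 2 * h1 + h0
    obtain ⟨a₁, ha₁⟩ := hkey
    refine ⟨e.symm (a₁, a₂), ?_⟩
    have hx : e.symm (a₁, a₂) * e.symm (a₁, a₂) + e.symm (a₁, a₂) * φ - δ =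
        e.symm ((a₁ * a₁ + a₁ * (e φ).1 - (e δ).1, a₂ * a₂ + a₂ * (e φ).2 - (e δ).2)) := by
      apply e.injective
      rw [RingEquiv.apply_symm_apply]
      simp only [map_add, map_sub, map_mul, RingEquiv.apply_symm_apply]
      exact Prod.ext rfl rfl
    rw [hx]
    exact (isUnit_pair ha₁ ha₂).map e.symm


lemma lemC2 (k : ℕ) (hk : 2 ≤ k) (δ φ : ZMod (2^k)) :
    ∃ a b : ZMod (2^k), IsUnit (a * a + a * b * φ - δ * b * b) ∧
      ¬(2 * b = 0 ∧ φ * b = 0) := by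
  have hk0 : k ≠ 0 := by omega
  set g := ZMod.castHom (dvd_pow_self 2 hk0) (ZMod 2) with hgdef
  have hz : ∀ x : ZMod 2, x = 0 ∨ x = 1 := by decide
  rcases hz (g φ) with hgφ | hgφ
  · rcases hz (g δ) with hgδ | hgδ
    · -- φ even, δ even : (a,b) = (1,1)
      refine ⟨1, 1, ?_, ?_⟩
      · apply unit_of_map_ne_zero Nat.prime_two hk0
        show g _ ≠ 0
        simp only [map_add, map_sub, map_mul, map_one, hgφ, hgδ, mul_zero, zero_mul,
          mul_one, one_mul, add_zero, zero_add, sub_zero]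
        decide
      · rintro ⟨h2b, -⟩
        rw [mul_one] at h2b
        have : ((2:ℕ) : ZMod (2^k)) = 0 := by exact_mod_cast h2b
        rw [ZMod.natCast_eq_zero_iff] at this
        have := Nat.le_of_dvd (by norm_num) this
        have h4 : 4 ≤ 2^k := by calc (4:ℕ) = 2^2 := by norm_num
                                    _ ≤ 2^k := Nat.pow_le_pow_right (by norm_num) hk
        omega
    · -- φ even, δ odd : (a,b) = (0,1)
      refine ⟨0, 1, ?_, ?_⟩
      · apply unit_of_map_ne_zero Nat.prime_two hk0
        show g _ ≠ 0
        simp only [map_add, map_sub, map_mul, map_zero, map_one, map_neg, hgδ, mul_zero, zero_mul,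
          mul_one, one_mul, add_zero, zero_add, zero_sub]
        decide
      · rintro ⟨h2b, -⟩
        rw [mul_one] at h2b
        have : ((2:ℕ) : ZMod (2^k)) = 0 := by exact_mod_cast h2b
        rw [ZMod.natCast_eq_zero_iff] at this
        have := Nat.le_of_dvd (by norm_num) this
        have h4 : 4 ≤ 2^k := by calc (4:ℕ) = 2^2 := by norm_num
                                    _ ≤ 2^k := Nat.pow_le_pow_right (by norm_num) hk
        omega
  · -- φ odd : (a,b) = (1, 2^(k-1))
    have hφu : IsUnit φ := by
      apply unit_of_map_ne_zero Nat.prime_two hk0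
      rw [hgφ]; decide
    set b : ZMod (2^k) := ((2^(k-1) : ℕ) : ZMod (2^k)) with hbdef
    have hbb : b * b = 0 := by
      rw [hbdef, ← Nat.cast_mul, ZMod.natCast_eq_zero_iff, ← pow_add]
      exact pow_dvd_pow 2 (by omega)
    have hbne : b ≠ 0 := by
      rw [hbdef, Ne, ZMod.natCast_eq_zero_iff]
      intro hdvd
      have := Nat.le_of_dvd (Nat.pow_pos (by norm_num)) hdvd
      have := Nat.pow_lt_pow_right (a := 2) (by norm_num) (show k - 1 < k by omega)
      omega
    refine ⟨1, b, ?_, ?_⟩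
    · apply unit_of_map_ne_zero Nat.prime_two hk0
      show g _ ≠ 0
      have hgb : g b = 0 := by
        rw [hbdef, map_natCast, ZMod.natCast_eq_zero_iff]
        exact dvd_pow_self 2 (by omega)
      simp only [map_add, map_sub, map_mul, map_one, hgb, mul_zero, zero_mul,
        mul_one, one_mul, add_zero, zero_add, sub_zero]
      decide
    · rintro ⟨-, hφb⟩
      exact hbne ((hφu.mul_right_eq_zero).mp hφb)
lemma c1_mul_self {N : ℕ} (φ : ZMod N) :
    (!![-1, 0; φ, 1] : Matrix (Fin 2) (Fin 2) (ZMod N)) * !![-1, 0; φ, 1] = 1 := by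
  ext i j
  fin_cases i <;> fin_cases j <;>
    simp [Matrix.mul_apply, Fin.sum_univ_two, Matrix.one_apply]

lemma habelH {N : ℕ} (δ φ : ZMod N)
    (habel : ∀ x ∈ normalizerGroup N δ φ, ∀ y ∈ normalizerGroup N δ φ, x * y = y * x) :
    ∀ a b : ZMod N, IsUnit (a * a + a * b * φ - δ * b * b) → (2 * b = 0 ∧ φ * b = 0) := by
  intro a b hdet
  have hA : IsUnit (cMat N δ φ a b) := by
    rw [Matrix.isUnit_iff_isUnit_det]
    have hd : (cMat N δ φ a b).det = a * a + a * b * φ - δ * b * b := by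
      rw [cMat, Matrix.det_fin_two_of]; ring
    rw [hd]; exact hdet
  set uA : GL (Fin 2) (ZMod N) := hA.unit with huA
  set c1 : GL (Fin 2) (ZMod N) :=
    ⟨!![-1, 0; φ, 1], !![-1, 0; φ, 1], c1_mul_self φ, c1_mul_self φ⟩ with hc1
  have hmemA : uA ∈ normalizerGroup N δ φ :=
    Subgroup.subset_closure (Set.mem_union_left _ ⟨a, b, hA.unit_spec⟩)
  have hmemc : c1 ∈ normalizerGroup N δ φ :=
    Subgroup.subset_closure (Set.mem_union_right _ rfl)
  have hcomm := habel uA hmemA c1 hmemc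
  have hmat : (cMat N δ φ a b) * !![-1, 0; φ, 1] = !![-1, 0; φ, 1] * (cMat N δ φ a b) := by
    have h := congrArg Units.val hcomm
    simp only [Units.val_mul] at h
    rw [huA] at h
    simpa [hA.unit_spec, hc1] using h
  have h00 := congrFun (congrFun hmat 0) 0
  have h01 := congrFun (congrFun hmat 0) 1
  simp [cMat, Matrix.mul_apply, Fin.sum_univ_two] at h00 h01
  constructor
  · linear_combination h01
  · linear_combination h00
lemma lemC (N : ℕ) (hN : 3 ≤ N) (δ φ : ZMod N) :
    ∃ a b : ZMod N, IsUnit (a * a + a * b * φ - δ * b * b) ∧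
      ¬(2 * b = 0 ∧ φ * b = 0) := by
  have hN0 : N ≠ 0 := by omega
  obtain ⟨k, m, hmodd, hco, rfl⟩ : ∃ k m, Odd m ∧ Nat.Coprime (2^k) m ∧ N = 2^k * m := by
    refine ⟨N.factorization 2, ordCompl[2] N, ?_, ?_, (Nat.ordProj_mul_ordCompl_eq_self N 2).symm⟩
    · have := Nat.not_dvd_ordCompl Nat.prime_two hN0
      rw [Nat.odd_iff]; omega
    · exact (Nat.coprime_ordCompl Nat.prime_two hN0).pow_left _
  set e := ZMod.chineseRemainder hco with he
  have hinv : ∀ x : ZMod (2^k * m), IsUnit (e x) → IsUnit x := by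
    intro x hx
    have := hx.map e.symm
    rwa [RingEquiv.symm_apply_apply] at this
  rcases (by rw [Nat.odd_iff] at hmodd; omega : m = 1 ∨ 3 ≤ m) with rfl | hm3
  · -- m = 1, N = 2^k
    have hk2 : 2 ≤ k := by
      by_contra h
      have hk1 : k < 2 := by omega
      interval_cases k <;> norm_num at hN
    obtain ⟨a₁, b₁, hu1, hnc1⟩ := lemC2 k hk2 (e δ).1 (e φ).1
    refine ⟨e.symm (a₁, 1), e.symm (b₁, 0), ?_, ?_⟩
    · apply hinv
      simp only [map_add, map_sub, map_mul, RingEquiv.apply_symm_apply]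
      have : ((a₁, 1) * (a₁, 1) + (a₁, 1) * (b₁, 0) * e φ - e δ * ((b₁, 0) * (b₁, 0))
          : ZMod (2^k) × ZMod 1) =
          (a₁ * a₁ + a₁ * b₁ * (e φ).1 - (e δ).1 * (b₁ * b₁),
           1 * 1 + 1 * 0 * (e φ).2 - (e δ).2 * (0 * 0)) := by
        exact Prod.ext rfl rfl
      rw [show (a₁, (1:ZMod 1)) * (a₁, 1) + (a₁, 1) * (b₁, 0) * e φ - e δ * (b₁, 0) * (b₁, 0) =
          (a₁ * a₁ + a₁ * b₁ * (e φ).1 - (e δ).1 * b₁ * b₁,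
           1 * 1 + 1 * 0 * (e φ).2 - (e δ).2 * 0 * 0) from Prod.ext rfl rfl]
      exact isUnit_pair hu1 (by
        rw [Subsingleton.elim (1 * 1 + 1 * 0 * (e φ).2 - (e δ).2 * 0 * 0 : ZMod 1) 1]
        exact isUnit_one)
    · rintro ⟨h2b, hφb⟩
      apply hnc1
      constructor
      · have := congrArg (fun z => (e z).1) h2b
        simpa only [map_mul, map_ofNat, map_zero, RingEquiv.apply_symm_apply, Prod.fst_mul, Prod.fst_zero, Prod.fst_ofNat] using this
      · have := congrArg (fun z => (e z).1) hφb
        simpa only [map_mul, map_zero, RingEquiv.apply_symm_apply, Prod.fst_mul, Prod.fst_zero] using this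
  · -- m ≥ 3
    haveI : NeZero m := ⟨by omega⟩
    obtain ⟨a₂, ha₂⟩ := lemA m hmodd (e δ).2 (e φ).2
    refine ⟨e.symm (1, a₂), e.symm (0, 1), ?_, ?_⟩
    · apply hinv
      simp only [map_add, map_sub, map_mul, RingEquiv.apply_symm_apply]
      rw [show ((1:ZMod (2^k)), a₂) * (1, a₂) + (1, a₂) * (0, 1) * e φ - e δ * (0, 1) * (0, 1) =
          (1 * 1 + 1 * 0 * (e φ).1 - (e δ).1 * 0 * 0,
           a₂ * a₂ + a₂ * 1 * (e φ).2 - (e δ).2 * 1 * 1) from Prod.ext rfl rfl]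
      have e1 : (1 * 1 + 1 * 0 * (e φ).1 - (e δ).1 * 0 * 0 : ZMod (2^k)) = 1 := by ring
      have e2 : (a₂ * a₂ + a₂ * 1 * (e φ).2 - (e δ).2 * 1 * 1 : ZMod m)
          = a₂ * a₂ + a₂ * (e φ).2 - (e δ).2 := by ring
      rw [e1, e2]
      exact isUnit_pair isUnit_one ha₂
    · rintro ⟨h2b, -⟩
      have h2 := congrArg (fun z => (e z).2) h2b
      simp only [map_mul, map_ofNat, map_zero, RingEquiv.apply_symm_apply] at h2
      have h2' : (2 : ZMod m) = 0 := by
        have : ((2:ZMod m)) * 1 = 0 := h2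
        rwa [mul_one] at this
      have : ((2:ℕ) : ZMod m) = 0 := by exact_mod_cast h2'
      rw [ZMod.natCast_eq_zero_iff] at this
      have := Nat.le_of_dvd (by norm_num) this
      omega
lemma closure_eq (δ φ : ZMod 2) (U : Matrix (Fin 2) (Fin 2) (ZMod 2)) (hUU : U * U = 1)
    (hcart : ∀ a b : ZMod 2, cMat 2 δ φ a b = 1 ∨ cMat 2 δ φ a b = U ∨ (cMat 2 δ φ a b).det = 0)
    (hc1 : (!![-1, 0; φ, 1] : Matrix (Fin 2) (Fin 2) (ZMod 2)) = 1 ∨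
      (!![-1, 0; φ, 1] : Matrix (Fin 2) (Fin 2) (ZMod 2)) = U)
    (hUin : (∃ a b : ZMod 2, U = cMat 2 δ φ a b) ∨
      U = (!![-1, 0; φ, 1] : Matrix (Fin 2) (Fin 2) (ZMod 2))) :
    ∃ u : GL (Fin 2) (ZMod 2), (↑u = U) ∧ normalizerGroup 2 δ φ = Subgroup.zpowers u := by
  refine ⟨⟨U, U, hUU, hUU⟩, rfl, le_antisymm ?_ ?_⟩
  · rw [normalizerGroup]
    refine (Subgroup.closure_le _).mpr ?_
    rintro g hg
    rcases hg with ⟨a, b, hab⟩ | hg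
    · rcases hcart a b with h | h | h
      · have hg1 : g = 1 := Units.ext (by rw [hab, h]; rfl)
        rw [hg1]; exact Subgroup.one_mem _
      · have hgu : g = ⟨U, U, hUU, hUU⟩ := Units.ext (by rw [hab, h])
        rw [hgu]; exact Subgroup.mem_zpowers _
      · exfalso
        have hu := (Matrix.isUnit_iff_isUnit_det (cMat 2 δ φ a b)).mp (hab ▸ g.isUnit)
        rw [h] at hu
        exact (by decide : ((0:ZMod 2) ≠ 1)) (isUnit_zero_iff.mp hu)
    · rcases hc1 with h | h
      · have hg1 : g = 1 := Units.ext (by rw [hg, h]; rfl)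
        rw [hg1]; exact Subgroup.one_mem _
      · have hgu : g = ⟨U, U, hUU, hUU⟩ := Units.ext (by rw [hg, h])
        rw [hgu]; exact Subgroup.mem_zpowers _
  · rw [Subgroup.zpowers_le, normalizerGroup]
    apply Subgroup.subset_closure
    rcases hUin with ⟨a, b, h⟩ | h
    · exact Set.mem_union_left _ ⟨a, b, h⟩
    · exact Set.mem_union_right _ h

lemma lemD (δ φ : ZMod 2) (h : φ = 0 ∨ (δ = 0 ∧ φ = 1)) :
    ∃ u : GL (Fin 2) (ZMod 2), u * u = 1 ∧ u ≠ 1 ∧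
      normalizerGroup 2 δ φ = Subgroup.zpowers u := by
  have hz : ∀ x : ZMod 2, x = 0 ∨ x = 1 := by decide
  obtain ⟨U, hUU, hUne, hcart, hc1, hUin⟩ :
      ∃ U : Matrix (Fin 2) (Fin 2) (ZMod 2), U * U = 1 ∧ U ≠ 1 ∧
        (∀ a b : ZMod 2, cMat 2 δ φ a b = 1 ∨ cMat 2 δ φ a b = U ∨ (cMat 2 δ φ a b).det = 0) ∧
        ((!![-1, 0; φ, 1] : Matrix (Fin 2) (Fin 2) (ZMod 2)) = 1 ∨
          (!![-1, 0; φ, 1] : Matrix (Fin 2) (Fin 2) (ZMod 2)) = U) ∧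
        ((∃ a b : ZMod 2, U = cMat 2 δ φ a b) ∨
          U = (!![-1, 0; φ, 1] : Matrix (Fin 2) (Fin 2) (ZMod 2))) := by
    rcases h with hφ | ⟨hδ, hφ⟩
    · subst hφ
      rcases hz δ with hδ | hδ <;> subst hδ
      · exact ⟨!![1, 1; 0, 1], by decide, by decide, by decide, by decide, by decide⟩
      · exact ⟨!![0, 1; 1, 0], by decide, by decide, by decide, by decide, by decide⟩
    · subst hδ; subst hφ
      exact ⟨!![1, 0; 1, 1], by decide, by decide, by decide, by decide, by decide⟩
  obtain ⟨u, hu, hEq⟩ := closure_eq δ φ U hUU hcart hc1 hUin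
  refine ⟨u, Units.ext ?_, fun hh => hUne (by rw [← hu, hh]; rfl), hEq⟩
  rw [Units.val_mul, hu, hUU]; rfl


lemma lemE_aux (G : Type*) [Group G] (u : G) (huu : u * u = 1) (hune : u ≠ 1) :
    Nonempty (Subgroup.zpowers u ≃* Multiplicative (ZMod 2)) := by
  haveI : Fact (Nat.Prime 2) := ⟨Nat.prime_two⟩
  have hord : orderOf u = 2 := orderOf_eq_prime (by rw [pow_two]; exact huu) hune
  haveI : IsCyclic (Subgroup.zpowers u) := by
    refine ⟨⟨⟨u, Subgroup.mem_zpowers u⟩, fun x => ?_⟩⟩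
    obtain ⟨k, hk⟩ := Subgroup.mem_zpowers_iff.mp x.2
    exact Subgroup.mem_zpowers_iff.mpr ⟨k, Subtype.ext (by rw [← hk]; rfl)⟩
  refine ⟨mulEquivOfCyclicCardEq ?_⟩
  rw [Nat.card_zpowers, hord]
  simp [Nat.card_eq_fintype_card]

theorem normalizer_abelian_iff (N : ℕ) (hN : 2 ≤ N) (δ φ : ℤ) :
    ((∀ x ∈ normalizerGroup N (δ : ZMod N) (φ : ZMod N),
        ∀ y ∈ normalizerGroup N (δ : ZMod N) (φ : ZMod N), x * y = y * x) ↔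
      (N = 2 ∧ ((φ : ZMod 2) = 0 ∨ ((δ : ZMod 2) = 0 ∧ (φ : ZMod 2) = 1)))) ∧
    ((∀ x ∈ normalizerGroup N (δ : ZMod N) (φ : ZMod N),
        ∀ y ∈ normalizerGroup N (δ : ZMod N) (φ : ZMod N), x * y = y * x) →
      Nonempty (normalizerGroup N (δ : ZMod N) (φ : ZMod N) ≃* Multiplicative (ZMod 2))) := by
  have fwd : (∀ x ∈ normalizerGroup N (δ : ZMod N) (φ : ZMod N),
        ∀ y ∈ normalizerGroup N (δ : ZMod N) (φ : ZMod N), x * y = y * x) →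
      N = 2 ∧ ((φ : ZMod 2) = 0 ∨ ((δ : ZMod 2) = 0 ∧ (φ : ZMod 2) = 1)) := by
    intro habel
    have H := habelH (δ : ZMod N) (φ : ZMod N) habel
    have hN2 : N = 2 := by
      by_contra hne
      obtain ⟨a, b, hu, hnc⟩ := lemC N (by omega) (δ : ZMod N) (φ : ZMod N)
      exact hnc (H a b hu)
    subst hN2
    refine ⟨rfl, ?_⟩
    have hz : ∀ x : ZMod 2, x = 0 ∨ x = 1 := by decide
    rcases hz (φ : ZMod 2) with hφ | hφ
    · exact Or.inl hφ
    rcases hz (δ : ZMod 2) with hδ | hδ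
    · exact Or.inr ⟨hδ, hφ⟩
    exfalso
    have hdet : ((0:ZMod 2) * 0 + 0 * 1 * (φ:ZMod 2) - (δ:ZMod 2) * 1 * 1) = 1 := by
      rw [hδ, hφ]; decide
    have hu1 : IsUnit ((0:ZMod 2) * 0 + 0 * 1 * (φ:ZMod 2) - (δ:ZMod 2) * 1 * 1) := by
      rw [hdet]; exact isUnit_one
    have h2 := (H 0 1 hu1).2
    rw [hφ, mul_one] at h2
    exact (by decide : ((1:ZMod 2) ≠ 0)) h2
  constructor
  · constructor
    · exact fwd
    · rintro ⟨rfl, hcond⟩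
      obtain ⟨u, huu, hune, hEq⟩ := lemD _ _ hcond
      rw [hEq]
      intro x hx y hy
      obtain ⟨mm, rfl⟩ := Subgroup.mem_zpowers_iff.mp hx
      obtain ⟨nn, rfl⟩ := Subgroup.mem_zpowers_iff.mp hy
      rw [← zpow_add, ← zpow_add, add_comm]
  · intro habel
    obtain ⟨hN2, hcond⟩ := fwd habel
    subst hN2
    obtain ⟨u, huu, hune, hEq⟩ := lemD _ _ hcond
    rw [hEq]
    exact lemE_aux _ u huu hune
end

section
/- The field F = ℚ(ζ₈, α) is a Galois extension of ℚ, and its Galois group Gal(F/ℚ) is abelian if and only if there exists an integer t with s = t² or s = −t². -/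
open Polynomial IntermediateField


open Polynomial IntermediateField

-- the splitting field setup
lemma part1 (s : ℤ) (hs : s ≠ 0)
    (ζ : ℂ) (hζ : IsPrimitiveRoot ζ 8) (α : ℂ) (hα : α ^ 4 = -(s : ℂ)) :
    ((X:ℚ[X]) ^ 8 - C ((s:ℚ)^2)).IsSplittingField ℚ (IntermediateField.adjoin ℚ ({ζ, α} : Set ℂ)) := by
  have hsC : ((s:ℂ)) ≠ 0 := Int.cast_ne_zero.mpr hs
  have hαne : α ≠ 0 := by
    intro h
    rw [h] at hα
    simp at hα
    exact hs hα
  have hα8 : α ^ 8 = (s:ℂ)^2 := by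
    have : α ^ 8 = (α ^ 4)^2 := by ring
    rw [this, hα]; ring
  set f : ℚ[X] := X ^ 8 - C ((s:ℚ)^2) with hf
  have hfne : f ≠ 0 := X_pow_sub_C_ne_zero (by norm_num) _
  have hsplits : (f.map (algebraMap ℚ ℂ)).Splits := IsAlgClosed.splits _
  have hroot : ∀ x : ℂ, x ∈ f.rootSet ℂ ↔ x ^ 8 = (s:ℂ)^2 := by
    intro x
    rw [mem_rootSet]
    have haev : aeval x f = x ^ 8 - (s:ℂ)^2 := by
      simp [hf]
    rw [haev, sub_eq_zero]
    exact ⟨fun h => h.2, fun h => ⟨hfne, h⟩⟩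
  have heq : IntermediateField.adjoin ℚ (f.rootSet ℂ) = IntermediateField.adjoin ℚ ({ζ, α} : Set ℂ) := by
    apply le_antisymm
    · rw [adjoin_le_iff]
      intro x hx
      rw [hroot] at hx
      have h8 : (x / α) ^ 8 = 1 := by
        rw [div_pow, hx, hα8, div_self (pow_ne_zero 2 hsC)]
      obtain ⟨i, -, hi⟩ := hζ.eq_pow_of_pow_eq_one h8
      have hxe : x = ζ ^ i * α := by
        rw [hi]; field_simp
      rw [hxe]
      exact mul_mem (pow_mem (subset_adjoin ℚ _ (by simp)) i) (subset_adjoin ℚ _ (by simp))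
    · rw [adjoin_le_iff]
      intro x hx
      rcases hx with h | h
      · -- x = ζ
        rw [h]
        have h1 : ζ * α ∈ f.rootSet ℂ := by
          rw [hroot, mul_pow, hζ.pow_eq_one, one_mul, hα8]
        have h2 : α ∈ f.rootSet ℂ := by rw [hroot, hα8]
        have : ζ = (ζ * α) / α := by field_simp
        rw [this]
        exact div_mem (subset_adjoin ℚ _ h1) (subset_adjoin ℚ _ h2)
      · simp only [Set.mem_singleton_iff] at h
        subst h
        exact subset_adjoin ℚ _ (by rw [hroot, hα8])
  rw [← heq]
  exact adjoin_rootSet_isSplittingField hsplits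



lemma sqcases {K : Type*} [Field K] {x y : K} (h : x ^ 2 = y ^ 2) : x = y ∨ x = -y := by
  have h0 : (x - y) * (x + y) = 0 := by linear_combination h
  rcases mul_eq_zero.mp h0 with h1 | h1
  · exact Or.inl (by linear_combination h1)
  · exact Or.inr (by linear_combination h1)

lemma quartic {K : Type*} [Field K] {i x y : K} (hi : i ^ 2 = -1) (h : x ^ 4 = y ^ 4) :
    x = y ∨ x = -y ∨ x = i * y ∨ x = -(i * y) := by
  have h0 : (x ^ 2) ^ 2 = (y ^ 2) ^ 2 := by ring_nf; linear_combination h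
  rcases sqcases h0 with h1 | h1
  · rcases sqcases h1 with h2 | h2
    · exact Or.inl h2
    · exact Or.inr (Or.inl h2)
  · have h2 : x ^ 2 = (i * y) ^ 2 := by rw [mul_pow, hi]; linear_combination h1
    rcases sqcases h2 with h3 | h3
    · exact Or.inr (Or.inr (Or.inl h3))
    · exact Or.inr (Or.inr (Or.inr h3))

lemma eq_neg_self_aux {K : Type*} [Field K] [CharZero K] {x : K} (h : x = -x) : x = 0 := by
  have h2 : (2 : K) * x = 0 := by linear_combination h
  rcases mul_eq_zero.mp h2 with h3 | h3
  · exact absurd h3 two_ne_zero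
  · exact h3

lemma rat_sq_int {q : ℚ} {m : ℤ} (h : q ^ 2 = (m : ℚ)) : ∃ t : ℤ, (t : ℚ) = q := by
  have hint : IsIntegral ℤ q := by
    refine ⟨X ^ 2 - C m, monic_X_pow_sub_C m (by norm_num), ?_⟩
    rw [eval₂_sub, eval₂_pow, eval₂_X, eval₂_C]
    simp [h]
  exact IsIntegrallyClosed.isIntegral_iff.mp hint


set_option maxHeartbeats 1000000 in
lemma forward (s : ℤ) (hs : s ≠ 0) (ζ α : ℂ) (hζ : IsPrimitiveRoot ζ 8)
    (hα : α ^ 4 = -(s : ℂ)) (K : IntermediateField ℚ ℂ)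
    [FiniteDimensional ℚ K] [IsGalois ℚ K] (hζK : ζ ∈ K) (hαK : α ∈ K)
    (habel : ∀ σ τ : K ≃ₐ[ℚ] K, σ * τ = τ * σ) :
    ∃ t : ℤ, s = t ^ 2 ∨ s = -t ^ 2 := by
  haveI : CharZero K := charZero_of_injective_algebraMap (algebraMap ℚ K).injective
  obtain ⟨ζ', hζ'v⟩ : ∃ z : K, (z : ℂ) = ζ := ⟨⟨ζ, hζK⟩, rfl⟩
  obtain ⟨α', hα'v⟩ : ∃ z : K, (z : ℂ) = α := ⟨⟨α, hαK⟩, rfl⟩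
  obtain ⟨i', hi'v⟩ : ∃ z : K, z = ζ' ^ 2 := ⟨_, rfl⟩
  have hiC : (i' : ℂ) = ζ ^ 2 := by rw [hi'v]; push_cast [hζ'v]; ring
  have hζ4 : ζ ^ 4 = -1 := by
    have h8 : ζ ^ 8 = 1 := hζ.pow_eq_one
    have h0 : (ζ ^ 4 - 1) * (ζ ^ 4 + 1) = 0 := by linear_combination h8
    rcases mul_eq_zero.mp h0 with h1 | h1
    · exact absurd (by linear_combination h1)
        (hζ.pow_ne_one_of_pos_of_lt (by norm_num) (by norm_num : (4:ℕ) < 8))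
    · linear_combination h1
  have hi2 : i' ^ 2 = -1 := by
    apply Subtype.ext
    push_cast [hiC]
    linear_combination hζ4
  have hα'4 : α' ^ 4 = -((s : ℤ) : K) := by
    apply Subtype.ext
    push_cast [hα'v]
    exact hα
  have hα'ne : α' ≠ 0 := by
    intro h
    rw [h] at hα'4
    have h0 : (0 : K) = -((s : ℤ) : K) := by simpa using hα'4
    have h1 : ((s : ℤ) : K) = 0 := by linear_combination h0
    exact hs (by exact_mod_cast h1)
  have hi'ne : i' ≠ 0 := by
    intro h
    rw [h] at hi2
    simp at hi2
  -- complex conjugation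
  obtain ⟨c, hcdef⟩ : ∃ c : K ≃ₐ[ℚ] K,
      c = (AlgEquiv.restrictScalars ℚ Complex.conjAe).restrictNormal K := ⟨_, rfl⟩
  have hcval : ∀ x : K, ((c x : K) : ℂ) = (starRingEnd ℂ) (x : ℂ) := by
    intro x
    rw [hcdef]
    exact AlgEquiv.restrictNormal_commutes (AlgEquiv.restrictScalars ℚ Complex.conjAe) K x
  have hci : c i' = -i' := by
    apply Subtype.ext
    rw [hcval]
    push_cast [hiC]
    have hI : ζ ^ 2 = Complex.I ∨ ζ ^ 2 = -Complex.I := by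
      apply sqcases
      rw [Complex.I_sq]
      ring_nf
      linear_combination hζ4
    rcases hI with h | h <;> rw [h] <;> simp [Complex.conj_I]
  -- per-sigma facts
  have hmapint : ∀ σ : K ≃ₐ[ℚ] K, σ (((s : ℤ) : K)) = ((s : ℤ) : K) := fun σ => map_intCast σ s
  have hσ4 : ∀ σ : K ≃ₐ[ℚ] K, (σ α') ^ 4 = α' ^ 4 := by
    intro σ
    rw [← map_pow, hα'4, map_neg, hmapint]
  have hσi : ∀ σ : K ≃ₐ[ℚ] K, σ i' = i' ∨ σ i' = -i' := by
    intro σ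
    apply sqcases
    rw [← map_pow, hi2, map_neg, map_one]
  have hcomm : ∀ σ : K ≃ₐ[ℚ] K, σ (c α') = c (σ α') := by
    intro σ
    rw [← AlgEquiv.mul_apply, habel σ c, AlgEquiv.mul_apply]
  -- fixed elements are rational
  have hfixed : ∀ γ : K, (∀ σ : K ≃ₐ[ℚ] K, σ γ = γ) → ∃ q : ℚ, algebraMap ℚ K q = γ := by
    intro γ hγ
    have hmem : γ ∈ IntermediateField.fixedField (⊤ : Subgroup (K ≃ₐ[ℚ] K)) := by
      rintro ⟨g, -⟩
      exact hγ g
    have hbot : IntermediateField.fixedField (⊤ : Subgroup (K ≃ₐ[ℚ] K)) = ⊥ :=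
      ((IsGalois.tfae (F := ℚ) (E := K)).out 0 1).mp (inferInstance : IsGalois ℚ K)
    rw [hbot, IntermediateField.mem_bot] at hmem
    exact hmem
  have caseA : (c α' = α' ∨ c α' = -α') → ∃ t : ℤ, s = t ^ 2 ∨ s = -t ^ 2 := by
    intro hcc
    have hfix : ∀ σ : K ≃ₐ[ℚ] K, σ (α' ^ 2) = α' ^ 2 := by
      intro σ
      have R := hcomm σ
      rcases hcc with hcc | hcc <;>
        rcases quartic hi2 (hσ4 σ) with h | h | h | h <;>
        rw [hcc, h] at R <;>
        simp only [map_neg, map_mul, hci, hcc, h, neg_mul, mul_neg, neg_neg] at R <;>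
        rw [map_pow, h] <;>
        first
          | ring1
          | (exfalso
             apply mul_ne_zero hi'ne hα'ne
             apply eq_neg_self_aux
             first
               | linear_combination R
               | linear_combination -R)
    obtain ⟨q, hq⟩ := hfixed _ hfix
    have hqC : (q : ℂ) = α ^ 2 := by
      have h1 := congrArg (algebraMap K ℂ) hq
      rw [← IsScalarTower.algebraMap_apply] at h1
      rw [show (algebraMap ℚ ℂ) q = (q : ℂ) from by norm_cast] at h1
      rw [h1, map_pow]
      show ((α' : ℂ)) ^ 2 = α ^ 2
      rw [hα'v]
    have hq2 : q ^ 2 = ((-s : ℤ) : ℚ) := by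
      have h2 : ((q : ℚ) : ℂ) ^ 2 = (((-s : ℤ) : ℚ) : ℂ) := by
        rw [hqC]
        push_cast
        linear_combination hα
      exact_mod_cast h2
    obtain ⟨t, ht⟩ := rat_sq_int hq2
    refine ⟨t, Or.inr ?_⟩
    have h4 : ((t : ℤ) : ℚ) ^ 2 = ((-s : ℤ) : ℚ) := by rw [ht]; exact hq2
    have h3 : t ^ 2 = -s := by exact_mod_cast h4
    linarith
  have caseB : (c α' = i' * α' ∨ c α' = -(i' * α')) → ∃ t : ℤ, s = t ^ 2 ∨ s = -t ^ 2 := by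
    intro hcc
    have hfix : ∀ σ : K ≃ₐ[ℚ] K, σ (α' ^ 2 * i') = α' ^ 2 * i' := by
      intro σ
      have R := hcomm σ
      rcases hcc with hcc | hcc <;>
        rcases hσi σ with hη | hη <;>
        rcases quartic hi2 (hσ4 σ) with h | h | h | h <;>
        rw [hcc, h] at R <;>
        simp only [map_neg, map_mul, hci, hcc, h, hη, neg_mul, mul_neg, neg_neg] at R <;>
        rw [map_mul, map_pow, h, hη] <;>
        first
          | ring1
          | linear_combination (α' ^ 2 * i') * hi2
          | linear_combination (-(α' ^ 2 * i')) * hi2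
          | (exfalso
             apply mul_ne_zero hi'ne hα'ne
             apply eq_neg_self_aux
             first
               | linear_combination R
               | linear_combination -R)
          | (exfalso
             apply hα'ne
             apply eq_neg_self_aux
             first
               | linear_combination -R + (2 * α') * hi2
               | linear_combination R + (2 * α') * hi2
               | linear_combination -R - (2 * α') * hi2
               | linear_combination R - (2 * α') * hi2
               | linear_combination -R + (2 * i' * α') * hi2
               | linear_combination R + (2 * i' * α') * hi2
               | linear_combination -R - (2 * i' * α') * hi2
               | linear_combination R - (2 * i' * α') * hi2)
    obtain ⟨q, hq⟩ := hfixed _ hfix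
    have hqC : (q : ℂ) = α ^ 2 * ζ ^ 2 := by
      have h1 := congrArg (algebraMap K ℂ) hq
      rw [← IsScalarTower.algebraMap_apply] at h1
      rw [show (algebraMap ℚ ℂ) q = (q : ℂ) from by norm_cast] at h1
      rw [h1, map_mul, map_pow]
      show ((α' : ℂ)) ^ 2 * ((i' : ℂ)) = α ^ 2 * ζ ^ 2
      rw [hα'v, hiC]
    have hq2 : q ^ 2 = ((s : ℤ) : ℚ) := by
      have h2 : ((q : ℚ) : ℂ) ^ 2 = (((s : ℤ) : ℚ) : ℂ) := by
        rw [hqC]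
        push_cast
        have hh : (α ^ 2 * ζ ^ 2) ^ 2 = (α ^ 4) * (ζ ^ 4) := by ring
        rw [hh, hα, hζ4]
        ring
      exact_mod_cast h2
    obtain ⟨t, ht⟩ := rat_sq_int hq2
    refine ⟨t, Or.inl ?_⟩
    have h4 : ((t : ℤ) : ℚ) ^ 2 = ((s : ℤ) : ℚ) := by rw [ht]; exact hq2
    have h3 : t ^ 2 = s := by exact_mod_cast h4
    linarith
  rcases quartic hi2 (hσ4 c) with hcc | hcc | hcc | hcc
  · exact caseA (Or.inl hcc)
  · exact caseA (Or.inr hcc)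
  · exact caseB (Or.inl hcc)
  · exact caseB (Or.inr hcc)



lemma sqcases' {K : Type*} [Field K] {x y : K} (h : x ^ 2 = y ^ 2) : x = y ∨ x = -y := by
  have h0 : (x - y) * (x + y) = 0 := by linear_combination h
  rcases mul_eq_zero.mp h0 with h1 | h1
  · exact Or.inl (by linear_combination h1)
  · exact Or.inr (by linear_combination h1)


set_option maxHeartbeats 1000000 in
lemma comm_core (m : ℤ) (ζ b : ℂ) (hζ : IsPrimitiveRoot ζ 8) (hb2 : b ^ 2 = (m : ℂ))
    (K : IntermediateField ℚ ℂ) (hζK : ζ ∈ K) (hbK : b ∈ K)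
    (hKeq : IntermediateField.adjoin ℚ ({ζ, b} : Set ℂ) = K)
    (σ τ : K ≃ₐ[ℚ] K) : σ * τ = τ * σ := by
  have hζ8 : ζ ^ 8 = 1 := hζ.pow_eq_one
  obtain ⟨ζ', hζ'v⟩ : ∃ z : K, (z : ℂ) = ζ := ⟨⟨ζ, hζK⟩, rfl⟩
  obtain ⟨β', hβ'v⟩ : ∃ z : K, (z : ℂ) = b := ⟨⟨b, hbK⟩, rfl⟩
  have htop : IntermediateField.adjoin ℚ ({ζ', β'} : Set K) = ⊤ := by
    rw [eq_top_iff]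
    rintro x -
    have hmap : IntermediateField.map K.val (IntermediateField.adjoin ℚ ({ζ', β'} : Set K))
        = IntermediateField.adjoin ℚ ({ζ, b} : Set ℂ) := by
      rw [IntermediateField.adjoin_map]
      congr 1
      simp [Set.image_insert_eq, hζ'v, hβ'v]
    have hxK : (x : ℂ) ∈ IntermediateField.adjoin ℚ ({ζ, b} : Set ℂ) := by
      rw [hKeq]; exact x.2
    rw [← hmap] at hxK
    obtain ⟨y, hy, hyx⟩ := hxK
    have hyx' : y = x := Subtype.ext hyx
    rwa [← hyx']
  have hζ'8 : ζ' ^ 8 = 1 := by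
    apply Subtype.ext
    push_cast [hζ'v]
    exact hζ8
  have hβ'2 : β' ^ 2 = ((m : ℤ) : K) := by
    apply Subtype.ext
    push_cast [hβ'v]
    exact_mod_cast hb2
  have key1 : ∀ ρ : K ≃ₐ[ℚ] K, ∃ k, ρ ζ' = ζ' ^ k := by
    intro ρ
    have h8 : (ρ ζ') ^ 8 = 1 := by rw [← map_pow, hζ'8, map_one]
    have h8C : ((ρ ζ' : K) : ℂ) ^ 8 = 1 := by
      exact_mod_cast congrArg (fun z : K => (z : ℂ)) h8
    obtain ⟨k, -, hk⟩ := hζ.eq_pow_of_pow_eq_one h8C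
    refine ⟨k, Subtype.ext ?_⟩
    push_cast [hζ'v]
    rw [← hk]
  have key2 : ∀ ρ : K ≃ₐ[ℚ] K, ρ β' = β' ∨ ρ β' = -β' := by
    intro ρ
    apply sqcases'
    rw [← map_pow, hβ'2, map_intCast]
  apply AlgEquiv.ext
  intro x
  rw [AlgEquiv.mul_apply, AlgEquiv.mul_apply]
  have hx : x ∈ IntermediateField.adjoin ℚ ({ζ', β'} : Set K) := by rw [htop]; trivial
  induction hx using IntermediateField.adjoin_induction with
  | mem y hy =>
    rcases hy with hy | hy
    · subst hy
      obtain ⟨k, hk⟩ := key1 σ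
      obtain ⟨l, hl⟩ := key1 τ
      rw [hl, hk, map_pow, map_pow, hk, hl, ← pow_mul, ← pow_mul, mul_comm]
    · simp only [Set.mem_singleton_iff] at hy
      subst hy
      rcases key2 σ with h1 | h1 <;> rcases key2 τ with h2 | h2 <;>
        simp [h1, h2, map_neg]
  | algebraMap r => simp [AlgEquiv.commutes]
  | add x y _ _ hx hy => simp [map_add, hx, hy]
  | inv x _ hx => simp only [map_inv₀, hx]
  | mul x y _ _ hx hy => simp [map_mul, hx, hy]

set_option maxHeartbeats 1000000 in
lemma backward (s t : ℤ) (hs : s ≠ 0) (ζ α : ℂ) (hζ : IsPrimitiveRoot ζ 8)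
    (hα : α ^ 4 = -(s : ℂ)) (ht : s = t ^ 2 ∨ s = -t ^ 2)
    (σ τ : (IntermediateField.adjoin ℚ ({ζ, α} : Set ℂ)) ≃ₐ[ℚ]
      (IntermediateField.adjoin ℚ ({ζ, α} : Set ℂ))) : σ * τ = τ * σ := by
  have htne : t ≠ 0 := by
    rintro rfl
    have h0 : s = 0 := by rcases ht with h | h <;> simpa using h
    exact hs h0
  have hζne : ζ ≠ 0 := hζ.ne_zero (by norm_num)
  have hζ8 : ζ ^ 8 = 1 := hζ.pow_eq_one
  -- the real square root of |t|
  set b : ℂ := ((Real.sqrt (|t| : ℝ) : ℝ) : ℂ) with hb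
  have hb2 : b ^ 2 = ((|t| : ℤ) : ℂ) := by
    rw [hb, ← Complex.ofReal_pow, Real.sq_sqrt (by positivity : (0:ℝ) ≤ |(t : ℝ)|),
      show |(t : ℝ)| = ((|t| : ℤ) : ℝ) by push_cast; ring]
    norm_cast
  have hbne : b ≠ 0 := by
    intro h
    rw [h] at hb2
    have : ((|t| : ℤ) : ℂ) = 0 := by rw [← hb2]; ring
    have h1 : |t| = 0 := by exact_mod_cast this
    exact htne (abs_eq_zero.mp h1)
  have hs2 : s ^ 2 = t ^ 4 := by rcases ht with h | h <;> rw [h] <;> ring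
  have hb8 : b ^ 8 = (s : ℂ) ^ 2 := by
    have : b ^ 8 = (b ^ 2) ^ 4 := by ring
    rw [this, hb2]
    have h1 : ((|t| : ℤ) : ℂ) ^ 4 = ((t : ℤ) : ℂ) ^ 4 := by
      norm_cast
      rw [← abs_pow, abs_of_nonneg (by positivity : (0:ℤ) ≤ t ^ 4)]
    rw [h1]
    exact_mod_cast (congrArg (fun x : ℤ => ((x : ℂ))) hs2).symm
  have hα8 : α ^ 8 = (s : ℂ) ^ 2 := by
    have : α ^ 8 = (α ^ 4) ^ 2 := by ring
    rw [this, hα]; ring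
  obtain ⟨j, -, hj⟩ : ∃ j < 8, ζ ^ j = α / b := by
    apply hζ.eq_pow_of_pow_eq_one
    rw [div_pow, hα8, hb8, div_self (pow_ne_zero 2 (Int.cast_ne_zero.mpr hs))]
  have hαβ : α = ζ ^ j * b := by rw [hj]; field_simp
  have hζK : ζ ∈ IntermediateField.adjoin ℚ ({ζ, α} : Set ℂ) := subset_adjoin ℚ _ (by simp)
  have hαK : α ∈ IntermediateField.adjoin ℚ ({ζ, α} : Set ℂ) := subset_adjoin ℚ _ (by simp)
  have hbK : b ∈ IntermediateField.adjoin ℚ ({ζ, α} : Set ℂ) := by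
    have : b = α / ζ ^ j := by rw [hαβ]; field_simp [pow_ne_zero j hζne]
    rw [this]
    exact div_mem hαK (pow_mem hζK j)
  have hKeq : IntermediateField.adjoin ℚ ({ζ, b} : Set ℂ)
      = IntermediateField.adjoin ℚ ({ζ, α} : Set ℂ) := by
    apply le_antisymm
    · rw [adjoin_le_iff]
      rintro x (rfl | hx)
      · exact hζK
      · simp only [Set.mem_singleton_iff] at hx
        rw [hx]
        exact hbK
    · rw [adjoin_le_iff]
      rintro x (rfl | hx)
      · exact subset_adjoin ℚ _ (by simp)
      · simp only [Set.mem_singleton_iff] at hx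
        rw [hx, hαβ]
        exact mul_mem (pow_mem (subset_adjoin ℚ _ (by simp)) j)
          (subset_adjoin ℚ _ (by simp))
  exact comm_core |t| ζ b hζ hb2 _ hζK hbK hKeq σ τ


theorem four_division_field_abelian_iff (s : ℤ) (hs : s ≠ 0)
    (hs4 : ∀ p : ℕ, p.Prime → ¬ ((p : ℤ) ^ 4 ∣ s))
    (ζ : ℂ) (hζ : IsPrimitiveRoot ζ 8) (α : ℂ) (hα : α ^ 4 = -(s : ℂ)) :
    IsGalois ℚ (IntermediateField.adjoin ℚ ({ζ, α} : Set ℂ)) ∧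
    ((∀ σ τ : IntermediateField.adjoin ℚ ({ζ, α} : Set ℂ) ≃ₐ[ℚ]
        IntermediateField.adjoin ℚ ({ζ, α} : Set ℂ), σ * τ = τ * σ) ↔
      ∃ t : ℤ, s = t ^ 2 ∨ s = -t ^ 2) := by
  haveI hsp := part1 s hs ζ hζ α hα
  haveI hfd : FiniteDimensional ℚ (IntermediateField.adjoin ℚ ({ζ, α} : Set ℂ)) :=
    Polynomial.IsSplittingField.finiteDimensional
      (IntermediateField.adjoin ℚ ({ζ, α} : Set ℂ)) (X ^ 8 - C ((s : ℚ) ^ 2))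
  have hsep : ((X : ℚ[X]) ^ 8 - C ((s : ℚ) ^ 2)).Separable :=
    separable_X_pow_sub_C _ (by norm_num)
      (pow_ne_zero 2 (by exact_mod_cast hs : ((s : ℚ)) ≠ 0))
  haveI hgal : IsGalois ℚ (IntermediateField.adjoin ℚ ({ζ, α} : Set ℂ)) :=
    IsGalois.of_separable_splitting_field hsep
  refine ⟨hgal, ?_, ?_⟩
  · intro habel
    exact forward s hs ζ α hζ hα _ (subset_adjoin ℚ _ (by simp)) (subset_adjoin ℚ _ (by simp))
      habel
  · rintro ⟨t, ht⟩ σ τ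
    exact backward s t hs ζ α hζ hα ht σ τ
end

section
/- Suppose s = t² or s = −t² for some squarefree integer t with t ∉ {1, −1, 2, −2}. Then F = ℚ(ζ₈, √t), and the Galois group Gal(F/ℚ) is isomorphic to (ℤ/2ℤ)³, i.e., it is abelian of order 8 and exponent 2. -/
open Polynomial

/-- A finite group of order 8 and exponent 2 is `(ZMod 2)³`. -/
lemma group_aux {G : Type*} [Group G] [Fintype G] (hcard : Fintype.card G = 8)
    (hexp : ∀ g : G, g * g = 1) :
    Nonempty (G ≃* (Multiplicative (ZMod 2) × Multiplicative (ZMod 2) × Multiplicative (ZMod 2))) := by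
  have hcomm : ∀ a b : G, a * b = b * a := by
    intro a b
    have h1 : ∀ g : G, g⁻¹ = g := fun g => inv_eq_of_mul_eq_one_right (hexp g)
    calc a * b = (a * b)⁻¹ := (h1 _).symm
    _ = b⁻¹ * a⁻¹ := mul_inv_rev a b
    _ = b * a := by rw [h1, h1]
  letI : CommGroup G := { mul_comm := hcomm }
  letI : AddCommGroup (Additive G) := Additive.addCommGroup
  have h2 : ∀ x : Additive G, 2 • x = 0 := by
    intro x
    rw [two_smul]
    exact hexp x.toMul
  letI : Module (ZMod 2) (Additive G) := AddCommGroup.zmodModule h2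
  haveI : Fintype (Additive G) := ‹Fintype G›
  haveI : Module.Finite (ZMod 2) (Additive G) := Module.Finite.of_finite
  have hc : Fintype.card (Additive G) = 8 := by
    rw [← hcard]; exact Fintype.card_congr (Equiv.refl _)
  have hpow : (2 : ℕ) ^ Module.finrank (ZMod 2) (Additive G) = 8 := by
    have := Module.card_eq_pow_finrank (K := ZMod 2) (V := Additive G)
    rw [hc, ZMod.card] at this
    omega
  have hrank : Module.finrank (ZMod 2) (Additive G) = 3 := by
    have h8 : (2:ℕ) ^ Module.finrank (ZMod 2) (Additive G) = 2 ^ 3 := by omega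
    exact Nat.pow_right_injective (le_refl 2) h8
  have b := (Module.finBasis (ZMod 2) (Additive G)).reindex (finCongr hrank)
  let e1 : Additive G ≃+ (Fin 3 → ZMod 2) := b.equivFun.toAddEquiv
  let e2 : (Fin 3 → ZMod 2) ≃+ (ZMod 2 × ZMod 2 × ZMod 2) :=
    { toFun := fun f => (f 0, f 1, f 2)
      invFun := fun x => ![x.1, x.2.1, x.2.2]
      left_inv := by intro f; funext i; fin_cases i <;> rfl
      right_inv := by intro x; rfl
      map_add' := by intro f g; rfl }
  let eA : Additive G ≃+ (ZMod 2 × ZMod 2 × ZMod 2) := e1.trans e2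
  refine ⟨?_⟩
  exact
    { toFun := fun g =>
        (Multiplicative.ofAdd (eA (Additive.ofMul g)).1,
         Multiplicative.ofAdd (eA (Additive.ofMul g)).2.1,
         Multiplicative.ofAdd (eA (Additive.ofMul g)).2.2)
      invFun := fun x => (eA.symm (x.1.toAdd, x.2.1.toAdd, x.2.2.toAdd)).toMul
      left_inv := by intro g; simp
      right_inv := by intro x; simp
      map_mul' := by
        intro g h
        have : eA (Additive.ofMul (g * h)) = eA (Additive.ofMul g) + eA (Additive.ofMul h) := by
          rw [← map_add]; rfl
        simp [this] }

/-- If `t` is squarefree and `t = u * q²` in `ℚ` with `u ∈ {±1, ±2}`, then `t = u`. -/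
lemma sq_aux (t u : ℤ) (ht : Squarefree t) (hu : u = 1 ∨ u = -1 ∨ u = 2 ∨ u = -2)
    (q : ℚ) (h : (t : ℚ) = (u : ℚ) * q ^ 2) : t = u := by
  -- (u*q)^2 = u * t
  have hr : ((u : ℚ) * q) ^ 2 = ((u * t : ℤ) : ℚ) := by
    push_cast
    have : (u:ℚ) * (u * q ^ 2) = u * t := by rw [← h]
    ring_nf
    ring_nf at this
    nlinarith [this]
  -- rational square root of an integer is an integer
  have hint : IsIntegral ℤ ((u : ℚ) * q) := by
    refine ⟨Polynomial.X ^ 2 - Polynomial.C (u * t), Polynomial.monic_X_pow_sub_C _ (by norm_num), ?_⟩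
    have : Polynomial.aeval ((u:ℚ) * q) (Polynomial.X ^ 2 - Polynomial.C (u * t)) = 0 := by
      simp [hr]
    simpa [Polynomial.aeval_def] using this
  obtain ⟨m, hm⟩ := IsIntegrallyClosed.isIntegral_iff.mp hint
  have hm2 : m ^ 2 = u * t := by
    have : ((m : ℚ)) ^ 2 = ((u * t : ℤ) : ℚ) := by rw [show ((m:ℚ)) = (u:ℚ) * q from by exact_mod_cast hm]; exact hr
    exact_mod_cast this
  -- now t = u * k^2 for some k
  have hu2 : u * u = u ^ 2 := (sq u).symm
  obtain ⟨k, hk⟩ : ∃ k : ℤ, t = u * k ^ 2 := by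
    rcases hu with rfl | rfl | rfl | rfl
    · exact ⟨m, by linarith [hm2]⟩
    · exact ⟨m, by linarith [hm2]⟩
    · -- m² = 2t, so m even
      have h2 : (2 : ℤ) ∣ m := by
        have : (2:ℤ) ∣ m ^ 2 := ⟨t, hm2⟩
        exact (Int.Prime.dvd_pow' (by norm_num) this)
      obtain ⟨j, rfl⟩ := h2
      exact ⟨j, by nlinarith [hm2]⟩
    · have h2 : (2 : ℤ) ∣ m := by
        have : (2:ℤ) ∣ m ^ 2 := ⟨-t, by linarith [hm2]⟩
        exact (Int.Prime.dvd_pow' (by norm_num) this)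
      obtain ⟨j, rfl⟩ := h2
      exact ⟨j, by nlinarith [hm2]⟩
  have hk1 : IsUnit k := ht k (by rw [hk]; exact ⟨u, by ring⟩)
  have : k ^ 2 = 1 := by
    rcases Int.isUnit_iff.mp hk1 with rfl | rfl <;> norm_num
  rw [hk, this, mul_one]

open Polynomial IntermediateField

variable {ζ : ℂ}

lemma minpoly_zeta (hζ : IsPrimitiveRoot ζ 8) : minpoly ℚ ζ = X ^ 4 + 1 := by
  have h1 : cyclotomic 8 ℚ = minpoly ℚ ζ := cyclotomic_eq_minpoly_rat hζ (by norm_num)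
  have h2 : cyclotomic 8 ℚ = X ^ 4 + 1 := by
    have := cyclotomic_prime_pow_eq_geom_sum (R := ℚ) (p := 2) (n := 2) (by norm_num)
    norm_num at this
    exact this
  rw [← h1, h2]

lemma zeta_integral (hζ : IsPrimitiveRoot ζ 8) : IsIntegral ℚ ζ :=
  ⟨X ^ 4 + 1, monic_X_pow_add_C 1 (by norm_num), by
    have h4 : ζ ^ 4 = -1 := (hζ.pow (by norm_num) (by norm_num : (8:ℕ) = 4 * 2)).eq_neg_one_of_two_right
    simp [eval₂_eq_eval_map, h4]⟩

lemma lin_indep (hζ : IsPrimitiveRoot ζ 8) (e0 e1 e2 e3 : ℚ)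
    (h : (e0 : ℂ) + e1 * ζ + e2 * ζ ^ 2 + e3 * ζ ^ 3 = 0) :
    e0 = 0 ∧ e1 = 0 ∧ e2 = 0 ∧ e3 = 0 := by
  set g : ℚ[X] := C e0 + C e1 * X + C e2 * X ^ 2 + C e3 * X ^ 3 with hg
  have hcoeff : g.coeff 0 = e0 ∧ g.coeff 1 = e1 ∧ g.coeff 2 = e2 ∧ g.coeff 3 = e3 := by
    refine ⟨?_, ?_, ?_, ?_⟩ <;> simp [hg, coeff_add, coeff_C, coeff_C_mul, coeff_X_pow]
  have hdeg : g.degree ≤ 3 := by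
    rw [hg]
    compute_degree
  have haeval : aeval ζ g = 0 := by
    have hmap : ∀ r : ℚ, algebraMap ℚ ℂ r = (r : ℂ) := fun r => eq_ratCast _ r
    simp only [hg, map_add, map_mul, aeval_C, aeval_X, map_pow, hmap]
    linear_combination h
  have hg0 : g = 0 := by
    by_contra hne
    have := minpoly.degree_le_of_ne_zero ℚ ζ hne haeval
    rw [minpoly_zeta hζ] at this
    have hd4 : (X ^ 4 + 1 : ℚ[X]).degree = 4 := by
      compute_degree!
    rw [hd4] at this
    exact absurd (this.trans hdeg) (by norm_num)
  refine ⟨?_, ?_, ?_, ?_⟩ <;> [skip; skip; skip; skip] <;>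
    simp only [← hcoeff.1, ← hcoeff.2.1, ← hcoeff.2.2.1, ← hcoeff.2.2.2, hg0, coeff_zero]

set_option maxHeartbeats 2000000 in
lemma not_sq (hζ : IsPrimitiveRoot ζ 8) (t : ℤ) (ht : Squarefree t)
    (ht' : t ≠ 1 ∧ t ≠ -1 ∧ t ≠ 2 ∧ t ≠ -2)
    (x : ℂ) (hx : x ∈ IntermediateField.adjoin ℚ ({ζ} : Set ℂ))
    (hx2 : x ^ 2 = (t : ℂ)) : False := by
  have hζ4 : ζ ^ 4 = -1 :=
    (hζ.pow (by norm_num) (by norm_num : (8 : ℕ) = 4 * 2)).eq_neg_one_of_two_right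
  have hmap : ∀ r : ℚ, algebraMap ℚ ℂ r = (r : ℂ) := fun r => eq_ratCast _ r
  set pb := IntermediateField.adjoin.powerBasis (zeta_integral hζ) with hpb
  have hdim : pb.dim = 4 := by
    show (minpoly ℚ ζ).natDegree = 4
    rw [minpoly_zeta hζ]
    compute_degree!
  obtain ⟨f, hfdeg, hf⟩ := pb.exists_eq_aeval (⟨x, hx⟩ : IntermediateField.adjoin ℚ ({ζ} : Set ℂ))
  rw [hdim] at hfdeg
  have hxval : x = Polynomial.aeval ζ f := by
    have h1 : algebraMap (IntermediateField.adjoin ℚ ({ζ} : Set ℂ)) ℂ (Polynomial.aeval pb.gen f)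
        = Polynomial.aeval (algebraMap _ ℂ pb.gen) f :=
      (Polynomial.aeval_algHom_apply (IsScalarTower.toAlgHom ℚ _ ℂ) pb.gen f).symm
    have h2 : algebraMap (IntermediateField.adjoin ℚ ({ζ} : Set ℂ)) ℂ pb.gen = ζ := rfl
    calc x = algebraMap _ ℂ (⟨x, hx⟩ : IntermediateField.adjoin ℚ ({ζ} : Set ℂ)) := rfl
    _ = algebraMap _ ℂ (Polynomial.aeval pb.gen f) := by exact congrArg _ hf
    _ = Polynomial.aeval ζ f := by rw [h1, h2]
  rw [Polynomial.aeval_eq_sum_range' hfdeg] at hxval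
  set a := f.coeff 0 with ha0; set b := f.coeff 1 with hb0; set c := f.coeff 2 with hc0; set d := f.coeff 3 with hd0
  have hxval' : x = (a : ℂ) + b * ζ + c * ζ ^ 2 + d * ζ ^ 3 := by
    rw [hxval]
    rw [Finset.sum_range_succ, Finset.sum_range_succ, Finset.sum_range_succ,
      Finset.sum_range_succ, Finset.sum_range_zero]
    simp only [Algebra.smul_def, hmap]
    ring
  rw [hxval'] at hx2
  have key : ((a ^ 2 - c ^ 2 - 2 * b * d - t : ℚ) : ℂ) + ((2 * a * b - 2 * c * d : ℚ)) * ζ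
      + ((b ^ 2 - d ^ 2 + 2 * a * c : ℚ)) * ζ ^ 2 + ((2 * a * d + 2 * b * c : ℚ)) * ζ ^ 3 = 0 := by
    push_cast
    linear_combination hx2 - ((c : ℂ) ^ 2 + 2 * b * d + 2 * c * d * ζ + d ^ 2 * ζ ^ 2) * hζ4
  obtain ⟨E1, E2, E3, E4⟩ := lin_indep hζ _ _ _ _ key
  clear key hx2 hxval' hxval hf
  clear_value a b c d
  -- now pure algebra over ℚ
  have hqt : ∃ u : ℤ, (u = 1 ∨ u = -1 ∨ u = 2 ∨ u = -2) ∧ ∃ q : ℚ, (t : ℚ) = (u : ℚ) * q ^ 2 := by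
    rcases eq_or_ne a 0 with ha | ha
    · subst ha
      rcases eq_or_ne b 0 with hb | hb
      · subst hb
        have hd : d = 0 := by nlinarith [E3]
        subst hd
        exact ⟨-1, by norm_num, c, by push_cast; linarith [E1]⟩
      · have hc : c = 0 := by
          have : b * c = 0 := by linarith [E4]
          rcases mul_eq_zero.mp this with h | h
          · exact absurd h hb
          · exact h
        subst hc
        have hbd : (b - d) * (b + d) = 0 := by nlinarith [E3]
        rcases mul_eq_zero.mp hbd with h | h
        · exact ⟨-2, by norm_num, b, by push_cast; nlinarith [E1, h]⟩
        · exact ⟨2, by norm_num, b, by push_cast; nlinarith [E1, h]⟩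
    · have hd : d = 0 := by
        have h1 : d * (a ^ 2 + c ^ 2) = 0 := by linear_combination (a / 2) * E4 - (c / 2) * E2
        rcases mul_eq_zero.mp h1 with h | h
        · exact h
        · exfalso
          have ha2 : a ^ 2 > 0 := by positivity
          nlinarith [sq_nonneg c]
      subst hd
      have hb : b = 0 := by
        have : a * b = 0 := by linarith [E2]
        rcases mul_eq_zero.mp this with h | h
        · exact absurd h ha
        · exact h
      subst hb
      have hc : c = 0 := by
        have : a * c = 0 := by linarith [E3]
        rcases mul_eq_zero.mp this with h | h
        · exact absurd h ha
        · exact h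
      subst hc
      exact ⟨1, by norm_num, a, by push_cast; linarith [E1]⟩
  obtain ⟨u, hu, q, hq⟩ := hqt
  have := sq_aux t u ht hu q hq
  rcases hu with rfl | rfl | rfl | rfl
  · exact ht'.1 this
  · exact ht'.2.1 this
  · exact ht'.2.2.1 this
  · exact ht'.2.2.2 this

lemma adjoin_eq_lemma {ζ α β : ℂ} (hζ : IsPrimitiveRoot ζ 8) (hαβ : α ^ 8 = β ^ 8)
    (hβ : β ≠ 0) :
    IntermediateField.adjoin ℚ ({ζ, α} : Set ℂ) = IntermediateField.adjoin ℚ ({ζ, β} : Set ℂ) := by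
  have h8 : (α / β) ^ 8 = 1 := by
    rw [div_pow, hαβ, div_self (pow_ne_zero _ hβ)]
  obtain ⟨k, -, hk⟩ := hζ.eq_pow_of_pow_eq_one h8
  have hα : α = ζ ^ k * β := by
    field_simp at hk
    exact hk.symm
  have hζk : (ζ : ℂ) ^ k ≠ 0 := pow_ne_zero _ (hζ.ne_zero (by norm_num))
  apply le_antisymm
  · rw [IntermediateField.adjoin_le_iff]
    rintro x hx
    rcases hx with rfl | hx
    · exact IntermediateField.subset_adjoin _ _ (Set.mem_insert _ _)
    · rcases hx with rfl
      rw [hα]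
      exact mul_mem (pow_mem (IntermediateField.subset_adjoin _ _ (Set.mem_insert _ _)) _)
        (IntermediateField.subset_adjoin _ _ (Set.mem_insert_of_mem _ rfl))
  · rw [IntermediateField.adjoin_le_iff]
    rintro x hx
    rcases hx with rfl | hx
    · exact IntermediateField.subset_adjoin _ _ (Set.mem_insert _ _)
    · rcases hx with rfl
      have hβeq : x = α * (ζ ^ k)⁻¹ := by
        rw [hα]; field_simp
      rw [hβeq]
      exact mul_mem (IntermediateField.subset_adjoin _ _ (Set.mem_insert_of_mem _ rfl))
        (inv_mem (pow_mem (IntermediateField.subset_adjoin _ _ (Set.mem_insert _ _)) _))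

variable {β : ℂ} {t : ℤ}

lemma beta_int_aux (hβ : β ^ 2 = (t : ℂ)) (K : IntermediateField ℚ ℂ) : IsIntegral K β := by
  refine ⟨X ^ 2 - C ((t : ℤ) : K), monic_X_pow_sub_C _ two_ne_zero, ?_⟩
  have : Polynomial.aeval β (X ^ 2 - C ((t : ℤ) : K)) = 0 := by
    rw [map_sub, map_pow, aeval_X, aeval_C, hβ]
    simp
  simpa [Polynomial.aeval_def] using this

lemma finrank_aux (hζ : IsPrimitiveRoot ζ 8) (ht : Squarefree t)
    (ht' : t ≠ 1 ∧ t ≠ -1 ∧ t ≠ 2 ∧ t ≠ -2) (hβ : β ^ 2 = (t : ℂ)) :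
    Module.finrank ℚ (IntermediateField.adjoin ℚ ({ζ, β} : Set ℂ)) = 8 ∧
      FiniteDimensional ℚ (IntermediateField.adjoin ℚ ({ζ, β} : Set ℂ)) := by
  set K := IntermediateField.adjoin ℚ ({ζ} : Set ℂ) with hK
  haveI : FiniteDimensional ℚ K := IntermediateField.adjoin.finiteDimensional (zeta_integral hζ)
  have hβint : IsIntegral K β := beta_int_aux hβ K
  have heval : Polynomial.aeval β (X ^ 2 - C ((t : ℤ) : K)) = 0 := by
    rw [map_sub, map_pow, aeval_X, aeval_C, hβ]
    simp
  have hirr : Irreducible (X ^ 2 - C ((t : ℤ) : K)) := by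
    apply X_pow_sub_C_irreducible_of_prime Nat.prime_two
    intro b hb
    apply not_sq hζ t ht ht' (b : ℂ) b.2
    have := congrArg (algebraMap K ℂ) hb
    push_cast at this
    simpa using this
  have hmin : minpoly K β = X ^ 2 - C ((t : ℤ) : K) :=
    (minpoly.eq_of_irreducible_of_monic hirr heval (monic_X_pow_sub_C _ two_ne_zero)).symm
  haveI hfdE : FiniteDimensional K (IntermediateField.adjoin K ({β} : Set ℂ)) :=
    IntermediateField.adjoin.finiteDimensional hβint
  have h2 : Module.finrank K (IntermediateField.adjoin K ({β} : Set ℂ)) = 2 := by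
    rw [IntermediateField.adjoin.finrank hβint, hmin, natDegree_X_pow_sub_C]
  have h4 : Module.finrank ℚ K = 4 := by
    rw [IntermediateField.adjoin.finrank (zeta_integral hζ), minpoly_zeta hζ]
    compute_degree!
  have h1 : (IntermediateField.adjoin K ({β} : Set ℂ)).restrictScalars ℚ
      = IntermediateField.adjoin ℚ ({ζ, β} : Set ℂ) := by
    exact (IntermediateField.adjoin_adjoin_left (F := ℚ) (S := ({ζ} : Set ℂ)) ({β} : Set ℂ)).trans (by rw [Set.singleton_union])
  constructor
  · rw [← h1]
    show Module.finrank ℚ (IntermediateField.adjoin K ({β} : Set ℂ)) = 8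
    rw [← Module.finrank_mul_finrank ℚ K (IntermediateField.adjoin K ({β} : Set ℂ)), h2, h4]
  · rw [← h1]
    show FiniteDimensional ℚ (IntermediateField.adjoin K ({β} : Set ℂ))
    exact FiniteDimensional.trans ℚ K _

lemma isGalois_aux (hζ : IsPrimitiveRoot ζ 8) (ht0 : t ≠ 0) (hβ : β ^ 2 = (t : ℂ)) :
    IsGalois ℚ (IntermediateField.adjoin ℚ ({ζ, β} : Set ℂ)) := by
  have hζ4 : ζ ^ 4 = -1 :=
    (hζ.pow (by norm_num) (by norm_num : (8 : ℕ) = 4 * 2)).eq_neg_one_of_two_right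
  have hmap : ∀ r : ℚ, algebraMap ℚ ℂ r = (r : ℂ) := fun r => eq_ratCast _ r
  set f : ℚ[X] := (X ^ 4 + 1) * (X ^ 2 - C (t : ℚ)) with hf
  have hne : f ≠ 0 :=
    mul_ne_zero (monic_X_pow_add_C 1 (by norm_num)).ne_zero
      (monic_X_pow_sub_C _ two_ne_zero).ne_zero
  have haev : ∀ x : ℂ, Polynomial.aeval x f = (x ^ 4 + 1) * (x ^ 2 - (t : ℂ)) := by
    intro x
    simp only [hf, map_mul, map_add, map_sub, map_pow, map_one, aeval_X, aeval_C, hmap]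
    push_cast
    ring
  have hsplits : (f.map (algebraMap ℚ ℂ)).Splits := IsAlgClosed.splits _
  have hadj : IntermediateField.adjoin ℚ (f.rootSet ℂ)
      = IntermediateField.adjoin ℚ ({ζ, β} : Set ℂ) := by
    apply le_antisymm
    · rw [IntermediateField.adjoin_le_iff]
      intro x hxr
      rw [Polynomial.mem_rootSet] at hxr
      have hx0 : (x ^ 4 + 1) * (x ^ 2 - (t : ℂ)) = 0 := by rw [← haev x]; exact hxr.2
      rcases mul_eq_zero.mp hx0 with h | h
      · have hx8 : x ^ 8 = 1 := by linear_combination (x ^ 4 - 1) * h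
        obtain ⟨k, -, hk⟩ := hζ.eq_pow_of_pow_eq_one hx8
        rw [← hk]
        exact pow_mem (IntermediateField.subset_adjoin _ _ (Set.mem_insert _ _)) _
      · have : (x - β) * (x + β) = 0 := by linear_combination h - hβ
        rcases mul_eq_zero.mp this with h' | h'
        · rw [sub_eq_zero.mp h']
          exact IntermediateField.subset_adjoin _ _ (Set.mem_insert_of_mem _ rfl)
        · have : x = -β := by linear_combination h'
          rw [this]
          exact neg_mem (IntermediateField.subset_adjoin _ _ (Set.mem_insert_of_mem _ rfl))
    · rw [IntermediateField.adjoin_le_iff]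
      rintro x hx
      rcases hx with rfl | hx
      · apply IntermediateField.subset_adjoin
        rw [Polynomial.mem_rootSet]
        refine ⟨hne, ?_⟩
        rw [haev, hζ4]
        ring
      · rcases hx with rfl
        apply IntermediateField.subset_adjoin
        rw [Polynomial.mem_rootSet]
        refine ⟨hne, ?_⟩
        rw [haev, hβ]
        ring
  haveI hsf : Polynomial.IsSplittingField ℚ
      (IntermediateField.adjoin ℚ ({ζ, β} : Set ℂ)) f :=
    hadj ▸ IntermediateField.adjoin_rootSet_isSplittingField hsplits
  have hsep : f.Separable := by
    have h1 : (X ^ 4 + 1 : ℚ[X]).Separable := by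
      have heq : (X ^ 4 + 1 : ℚ[X]) = X ^ 4 - C (-1) := by
        rw [map_neg, map_one]; ring
      rw [heq]
      exact Polynomial.separable_X_pow_sub_C _ (by norm_num) (by norm_num)
    have h2 : (X ^ 2 - C (t : ℚ) : ℚ[X]).Separable :=
      Polynomial.separable_X_pow_sub_C _ (by norm_num) (by exact_mod_cast ht0)
    have hcop : IsCoprime (X ^ 4 + 1 : ℚ[X]) (X ^ 2 - C (t : ℚ)) := by
      have hirr : Irreducible (X ^ 4 + 1 : ℚ[X]) :=
        minpoly_zeta hζ ▸ minpoly.irreducible (zeta_integral hζ)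
      rw [hirr.coprime_iff_not_dvd]
      intro hdvd
      have hdeg := Polynomial.degree_le_of_dvd hdvd (monic_X_pow_sub_C _ two_ne_zero).ne_zero
      have hd1 : (X ^ 4 + 1 : ℚ[X]).degree = 4 := by compute_degree!
      have hd2 : (X ^ 2 - C (t : ℚ)).degree = 2 := degree_X_pow_sub_C (by norm_num) _
      rw [hd1, hd2] at hdeg
      norm_num at hdeg
    exact h1.mul h2 hcop
  exact IsGalois.of_separable_splitting_field hsep

lemma exp_two_aux (hζ : IsPrimitiveRoot ζ 8) (hβ : β ^ 2 = (t : ℂ))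
    : ∀ σ : (IntermediateField.adjoin ℚ ({ζ, β} : Set ℂ) ≃ₐ[ℚ]
      IntermediateField.adjoin ℚ ({ζ, β} : Set ℂ)), σ * σ = 1 := by
  set F := IntermediateField.adjoin ℚ ({ζ, β} : Set ℂ) with hF
  intro σ
  have hζm : ζ ∈ F := IntermediateField.subset_adjoin _ _ (Set.mem_insert _ _)
  have hβm : β ∈ F := IntermediateField.subset_adjoin _ _ (Set.mem_insert_of_mem _ rfl)
  set z : F := ⟨ζ, hζm⟩ with hzdef
  set bb : F := ⟨β, hβm⟩ with hbbdef
  have hz : IsPrimitiveRoot z 8 := by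
    apply IsPrimitiveRoot.of_map_of_injective (f := algebraMap F ℂ)
    · exact hζ
    · exact (algebraMap F ℂ).injective
  have hz4 : z ^ 4 = -1 :=
    (hz.pow (by norm_num) (by norm_num : (8 : ℕ) = 4 * 2)).eq_neg_one_of_two_right
  have h1 : σ (σ z) = z := by
    have h8 : (σ z) ^ 8 = 1 := by rw [← map_pow, hz.pow_eq_one, map_one]
    obtain ⟨k, hk8, hk⟩ := hz.eq_pow_of_pow_eq_one h8
    have hk4 : (σ z) ^ 4 = -1 := by rw [← map_pow, hz4, map_neg, map_one]
    have hkodd : k % 2 = 1 := by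
      by_contra hodd
      obtain ⟨m, rfl⟩ : ∃ m, k = 2 * m := ⟨k / 2, by omega⟩
      have hcon : (-1 : F) = 1 := by
        rw [← hk4, ← hk, ← pow_mul, show 2 * m * 4 = 8 * m by ring, pow_mul,
          hz.pow_eq_one, one_pow]
      have hcon2 := congrArg (algebraMap F ℂ) hcon
      rw [map_neg, map_one] at hcon2
      norm_num at hcon2
    obtain ⟨m, rfl⟩ : ∃ m, k = 2 * m + 1 := ⟨k / 2, by omega⟩
    have hσz : σ z = z ^ (2 * m + 1) := hk.symm
    rw [hσz, map_pow, hσz, ← pow_mul]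
    obtain ⟨j, hj⟩ : ∃ j, (2 * m + 1) * (2 * m + 1) = 8 * j + 1 := by
      rcases Nat.even_or_odd m with ⟨i, hi⟩ | ⟨i, hi⟩
      · exact ⟨i * (m + 1), by subst hi; ring⟩
      · exact ⟨m * (i + 1), by subst hi; ring⟩
    rw [hj, pow_add, pow_mul, hz.pow_eq_one, one_pow, pow_one, one_mul]
  have h2 : σ (σ bb) = bb := by
    have hbbt : bb ^ 2 = ((t : ℤ) : F) := by
      apply Subtype.ext
      push_cast
      exact hβ
    have hsq : (σ bb) ^ 2 = bb ^ 2 := by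
      rw [← map_pow, hbbt, map_intCast]
    have hzero : (σ bb - bb) * (σ bb + bb) = 0 := by linear_combination hsq
    rcases mul_eq_zero.mp hzero with h | h
    · rw [sub_eq_zero.mp h, sub_eq_zero.mp h]
    · have hneg : σ bb = -bb := by linear_combination h
      rw [hneg, map_neg, hneg, neg_neg]
  have hhom : ((σ * σ : F ≃ₐ[ℚ] F) : F →ₐ[ℚ] F) = AlgHom.id ℚ F := by
    apply IntermediateField.algHom_ext_of_eq_adjoin ℚ hF
    intro x hx
    rcases hx with rfl | hx
    · exact h1
    · rcases hx with rfl
      exact h2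
  apply AlgEquiv.ext
  intro x
  exact AlgHom.congr_fun hhom x

theorem four_division_field_of_s_square (s : ℤ) (hs : s ≠ 0)
    (hs4 : ∀ p : ℕ, p.Prime → ¬ ((p : ℤ) ^ 4 ∣ s))
    (ζ : ℂ) (hζ : IsPrimitiveRoot ζ 8) (α : ℂ) (hα : α ^ 4 = -(s : ℂ))
    (t : ℤ) (ht : Squarefree t) (ht' : t ≠ 1 ∧ t ≠ -1 ∧ t ≠ 2 ∧ t ≠ -2)
    (hst : s = t ^ 2 ∨ s = -t ^ 2) :
    (∀ β : ℂ, β ^ 2 = (t : ℂ) →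
      IntermediateField.adjoin ℚ ({ζ, α} : Set ℂ) =
        IntermediateField.adjoin ℚ ({ζ, β} : Set ℂ)) ∧
    Nonempty ((IntermediateField.adjoin ℚ ({ζ, α} : Set ℂ) ≃ₐ[ℚ]
        IntermediateField.adjoin ℚ ({ζ, α} : Set ℂ)) ≃*
      (Multiplicative (ZMod 2) × Multiplicative (ZMod 2) × Multiplicative (ZMod 2))) := by
  have ht0 : (t : ℂ) ≠ 0 := Int.cast_ne_zero.mpr ht.ne_zero
  have hα8 : α ^ 8 = ((t : ℂ)) ^ 4 := by
    have hs2 : (s : ℂ) ^ 2 = (t : ℂ) ^ 4 := by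
      rcases hst with rfl | rfl <;> push_cast <;> ring
    calc α ^ 8 = (s : ℂ) ^ 2 := by linear_combination (α ^ 4 - (s : ℂ)) * hα
    _ = (t : ℂ) ^ 4 := hs2
  have part1 : ∀ β : ℂ, β ^ 2 = (t : ℂ) →
      IntermediateField.adjoin ℚ ({ζ, α} : Set ℂ) =
        IntermediateField.adjoin ℚ ({ζ, β} : Set ℂ) := by
    intro β hβ
    apply adjoin_eq_lemma hζ
    · have hβ8 : β ^ 8 = (t : ℂ) ^ 4 := by
        linear_combination (β ^ 6 + β ^ 4 * (t : ℂ) + β ^ 2 * (t : ℂ) ^ 2 + (t : ℂ) ^ 3) * hβ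
      rw [hα8, hβ8]
    · intro h0
      rw [h0] at hβ
      exact ht0 (by simpa using hβ.symm)
  obtain ⟨β, hβ⟩ := IsAlgClosed.exists_pow_nat_eq (k := ℂ) (t : ℂ) (n := 2) (by norm_num)
  refine ⟨part1, ?_⟩
  rw [part1 β hβ]
  obtain ⟨hrank, hfd⟩ := finrank_aux hζ ht ht' hβ
  haveI := hfd
  haveI := isGalois_aux hζ ht.ne_zero hβ
  have hcard : Fintype.card ((IntermediateField.adjoin ℚ ({ζ, β} : Set ℂ)) ≃ₐ[ℚ]
      (IntermediateField.adjoin ℚ ({ζ, β} : Set ℂ))) = 8 := by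
    rw [← Nat.card_eq_fintype_card, IsGalois.card_aut_eq_finrank, hrank]
  exact group_aux hcard (exp_two_aux hζ hβ)
end

section
/- Suppose s = 2t² or s = −2t² for some squarefree integer t. Then the Galois group Gal(F/ℚ) is a non-abelian group of order 8 (isomorphic to the dihedral group of order 8). -/
set_option synthInstance.maxHeartbeats 1000000
set_option maxHeartbeats 2000000

open Polynomial IntermediateField Module

lemma no_rat_sqrt2 (a u : ℚ) (h : u^2 = 2*a^2) : a = 0 ∧ u = 0 := by
  have ha : a = 0 := by
    by_contra ha
    set q := u / a with hq
    have hq2 : (q:ℝ)^2 = 2 := by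
      have : q^2 = 2 := by rw [hq]; field_simp; linarith [h]
      exact_mod_cast congrArg (Rat.cast : ℚ → ℝ) this
    have : Real.sqrt 2 = |(q:ℝ)| := by
      rw [← hq2, Real.sqrt_sq_eq_abs]
    exact irrational_sqrt_two (this ▸ ⟨|q|, by push_cast; rfl⟩)
  refine ⟨ha, ?_⟩
  have : u^2 = 0 := by rw [h, ha]; ring
  exact pow_eq_zero_iff (by norm_num) |>.1 this

lemma sum_sq_zero (x y : ℚ) (h : 2*x^2 + y^2 = 0) : x = 0 ∧ y = 0 := by
  have hx : x^2 = 0 := by nlinarith [sq_nonneg x, sq_nonneg y]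
  have hy : y^2 = 0 := by nlinarith [sq_nonneg x, sq_nonneg y]
  exact ⟨pow_eq_zero_iff (by norm_num) |>.1 hx, pow_eq_zero_iff (by norm_num) |>.1 hy⟩

lemma rat_system_A (a b c d t : ℚ)
    (h1 : a^2 - 2*b*d - c^2 = 0) (h2 : 2*a*b - 2*c*d - t = 0)
    (h3 : 2*a*c + b^2 - d^2 = 0) (h4 : 2*a*d + 2*b*c + t = 0) : t = 0 := by
  set u := b - d with hu
  set v := b + d with hv
  have hI : a*v + c*u = 0 := by rw [hu, hv]; linarith
  have hII : 2*a*c + u*v = 0 := by rw [hu, hv]; linear_combination h3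
  have hIII : a*u - c*v = t := by rw [hu, hv]; linarith
  have hIV : 2*a^2 + u^2 = 2*c^2 + v^2 := by rw [hu, hv]; linear_combination 2*h1
  rcases eq_or_ne u 0 with h0 | h0
  · have hav : a * v = 0 := by linear_combination hI - c * h0
    rcases mul_eq_zero.1 hav with ha | hv0
    · have hcv := sum_sq_zero c v (by linear_combination -hIV + 2*a*ha + u*h0)
      linear_combination -hIII + u*ha - v*hcv.1
    · have hac : a*c = 0 := by linear_combination (1/2)*hII - (v/2)*h0
      rcases mul_eq_zero.1 hac with ha | hc
      · linear_combination -hIII + u*ha - c*hv0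
      · linear_combination -hIII + a*h0 - v*hc
  · exfalso
    have hveq : v*(u^2 - 2*a^2) = 0 := by linear_combination u*hII - 2*a*hI
    rcases mul_eq_zero.1 hveq with hv0 | hQ
    · have hcu : c*u = 0 := by linear_combination hI - a*hv0
      have hc : c = 0 := by rcases mul_eq_zero.1 hcu with h | h; exact h; exact absurd h h0
      have := sum_sq_zero a u (by linear_combination hIV + 2*c*hc + v*hv0)
      exact h0 this.2
    · exact h0 (no_rat_sqrt2 a u (by linarith)).2

lemma rat_system_B (a b c d t : ℚ)
    (h1 : a^2 - 2*b*d - c^2 = 0) (h2 : 2*a*b - 2*c*d - t = 0)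
    (h3 : 2*a*c + b^2 - d^2 = 0) (h4 : 2*a*d + 2*b*c - t = 0) : t = 0 := by
  set u := b - d with hu
  set v := b + d with hv
  have hI : a*u - c*v = 0 := by rw [hu, hv]; linarith
  have hII : 2*a*c + u*v = 0 := by rw [hu, hv]; linear_combination h3
  have hIII : a*v + c*u = t := by rw [hu, hv]; linarith
  have hIV : 2*a^2 + u^2 = 2*c^2 + v^2 := by rw [hu, hv]; linear_combination 2*h1
  rcases eq_or_ne u 0 with h0 | h0
  · have hcv : c * v = 0 := by linear_combination -hI + a*h0
    rcases mul_eq_zero.1 hcv with hc | hv0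
    · have hav := no_rat_sqrt2 a v (by linear_combination -hIV - 2*c*hc + u*h0)
      linear_combination -hIII + v*hav.1 + c*h0
    · linear_combination -hIII + a*hv0 + c*h0
  · exfalso
    have hveq : v*(2*c^2 + u^2) = 0 := by linear_combination u*hII - 2*c*hI
    rcases mul_eq_zero.1 hveq with hv0 | hQ
    · have hau : a*u = 0 := by linear_combination hI + c*hv0
      have ha : a = 0 := by rcases mul_eq_zero.1 hau with h | h; exact h; exact absurd h h0
      have := no_rat_sqrt2 c u (by linear_combination hIV - 2*a*ha + v*hv0)
      exact h0 this.2
    · exact h0 (sum_sq_zero c u hQ).2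

lemma zeta8_pow4 {ζ : ℂ} (hζ : IsPrimitiveRoot ζ 8) : ζ^4 = -1 := by
  have h8 := hζ.pow_eq_one
  have h4 : ζ^4 ≠ 1 := hζ.pow_ne_one_of_pos_of_lt (by norm_num) (by norm_num)
  have : (ζ^4 - 1) * (ζ^4 + 1) = 0 := by linear_combination h8
  rcases mul_eq_zero.1 this with h | h
  · exact absurd (sub_eq_zero.1 h) h4
  · linear_combination h

lemma zeta8_int {ζ : ℂ} (hζ : IsPrimitiveRoot ζ 8) : IsIntegral ℚ ζ :=
  ⟨X^8 - 1, monic_X_pow_sub_C 1 (by norm_num), by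
    simp [eval₂_sub, eval₂_pow, hζ.pow_eq_one]⟩

lemma minpoly_zeta8_natDegree {ζ : ℂ} (hζ : IsPrimitiveRoot ζ 8) :
    (minpoly ℚ ζ).natDegree = 4 := by
  rw [← Polynomial.cyclotomic_eq_minpoly_rat hζ (by norm_num), Polynomial.natDegree_cyclotomic]
  decide

lemma alpha_not_mem {ζ α : ℂ} (hζ : IsPrimitiveRoot ζ 8) (t : ℚ) (ht : t ≠ 0)
    (h : α^2 = t*ζ - t*ζ^3 ∨ α^2 = t*ζ + t*ζ^3) :
    α ∉ IntermediateField.adjoin ℚ ({ζ} : Set ℂ) := by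
  intro hmem
  have hζint := zeta8_int hζ
  have hz4 := zeta8_pow4 hζ
  have hmem' : α ∈ Algebra.adjoin ℚ ({ζ} : Set ℂ) := by
    rw [← IntermediateField.adjoin_simple_toSubalgebra_of_isAlgebraic hζint.isAlgebraic]
    exact hmem
  rw [Algebra.adjoin_singleton_eq_range_aeval] at hmem'
  obtain ⟨P, hP'⟩ := hmem'
  have hP : aeval ζ P = α := hP'
  set m := minpoly ℚ ζ with hm
  have hmmonic : m.Monic := minpoly.monic hζint
  have hm4 : m.natDegree = 4 := minpoly_zeta8_natDegree hζ
  have hmdeg : m.degree = (4 : ℕ) := by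
    rw [Polynomial.degree_eq_natDegree hmmonic.ne_zero, hm4]
  set Q := P %ₘ m with hQ
  have hQdeg : Q.degree < (4 : ℕ) := by
    rw [← hmdeg]; exact Polynomial.degree_modByMonic_lt P hmmonic
  have hQnd : Q.natDegree < 4 := by
    rcases eq_or_ne Q 0 with h0 | h0
    · simp [h0]
    · exact (Polynomial.natDegree_lt_iff_degree_lt h0).2 hQdeg
  have haQ : (aeval ζ) Q = α := by
    rw [hQ, Polynomial.modByMonic_eq_sub_mul_div P m, map_sub, map_mul, minpoly.aeval]
    simp [hP]
  have hrepr : α = (Q.coeff 0 : ℂ) + Q.coeff 1 * ζ + Q.coeff 2 * ζ^2 + Q.coeff 3 * ζ^3 := by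
    rw [← haQ, Polynomial.aeval_eq_sum_range' hQnd]
    simp [Finset.sum_range_succ, Algebra.smul_def]
  set a := Q.coeff 0
  set b := Q.coeff 1
  set c := Q.coeff 2
  set d := Q.coeff 3
  -- helper to conclude coefficients vanish
  have key : ∀ e0 e1 e2 e3 : ℚ, ((e0:ℂ) + e1*ζ + e2*ζ^2 + e3*ζ^3 = 0) →
      e0 = 0 ∧ e1 = 0 ∧ e2 = 0 ∧ e3 = 0 := by
    intro e0 e1 e2 e3 hE
    set R : ℚ[X] := C e0 + C e1 * X + C e2 * X^2 + C e3 * X^3 with hR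
    have hRa : aeval ζ R = 0 := by
      rw [hR]; push_cast; simpa using hE
    have hR0 : R = 0 := by
      by_contra hR0
      have hled := minpoly.degree_le_of_ne_zero ℚ ζ hR0 hRa
      have : R.degree ≤ (3:ℕ) := by
        rw [hR]
        compute_degree!
      rw [hmdeg] at hled
      have : (4:ℕ) ≤ (3 : WithBot ℕ) := le_trans hled this
      norm_num at this
    refine ⟨?_, ?_, ?_, ?_⟩
    · have := congrArg (fun p => Polynomial.coeff p 0) hR0
      simpa [hR, Polynomial.coeff_add] using this
    · have := congrArg (fun p => Polynomial.coeff p 1) hR0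
      simpa [hR, Polynomial.coeff_add] using this
    · have := congrArg (fun p => Polynomial.coeff p 2) hR0
      simpa [hR, Polynomial.coeff_add] using this
    · have := congrArg (fun p => Polynomial.coeff p 3) hR0
      simpa [hR, Polynomial.coeff_add] using this
  rcases h with hA | hB
  · have hE : ((a^2 - 2*b*d - c^2 : ℚ) : ℂ) + ((2*a*b - 2*c*d - t : ℚ)) * ζ
        + ((2*a*c + b^2 - d^2 : ℚ)) * ζ^2 + ((2*a*d + 2*b*c + t : ℚ)) * ζ^3 = 0 := by
      push_cast
      linear_combination -(α + ((a:ℂ) + b*ζ + c*ζ^2 + d*ζ^3))*hrepr + hA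
        - (((c:ℂ)^2 + 2*b*d) + 2*c*d*ζ + (d:ℂ)^2*ζ^2)*hz4
    obtain ⟨h1, h2, h3, h4⟩ := key _ _ _ _ hE
    exact ht (rat_system_A a b c d t h1 h2 h3 h4)
  · have hE : ((a^2 - 2*b*d - c^2 : ℚ) : ℂ) + ((2*a*b - 2*c*d - t : ℚ)) * ζ
        + ((2*a*c + b^2 - d^2 : ℚ)) * ζ^2 + ((2*a*d + 2*b*c - t : ℚ)) * ζ^3 = 0 := by
      push_cast
      linear_combination -(α + ((a:ℂ) + b*ζ + c*ζ^2 + d*ζ^3))*hrepr + hB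
        - (((c:ℂ)^2 + 2*b*d) + 2*c*d*ζ + (d:ℂ)^2*ζ^2)*hz4
    obtain ⟨h1, h2, h3, h4⟩ := key _ _ _ _ hE
    exact ht (rat_system_B a b c d t h1 h2 h3 h4)

lemma normal_of_adjoin_rootSet (g : ℚ[X]) (S : Set ℂ)
    (h1 : g.rootSet ℂ ⊆ (IntermediateField.adjoin ℚ S : Set ℂ))
    (h2 : S ⊆ (IntermediateField.adjoin ℚ (g.rootSet ℂ) : Set ℂ)) :
    Normal ℚ ↥(IntermediateField.adjoin ℚ S) := by
  have heq : IntermediateField.adjoin ℚ (g.rootSet ℂ) = IntermediateField.adjoin ℚ S :=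
    le_antisymm (IntermediateField.adjoin_le_iff.2 h1) (IntermediateField.adjoin_le_iff.2 h2)
  haveI := IntermediateField.adjoin_rootSet_isSplittingField
    (L := ℂ) (p := g) (IsAlgClosed.splits _)
  have hn : Normal ℚ ↥(IntermediateField.adjoin ℚ (g.rootSet ℂ)) :=
    Normal.of_isSplittingField (hFEp := this) g
  exact heq ▸ hn

lemma normal_L {ζ : ℂ} (hz8 : ζ^8 = 1) (hz4 : ζ^4 = -1) :
    Normal ℚ ↥(IntermediateField.adjoin ℚ ({ζ} : Set ℂ)) := by
  have hg : ((X^4 + 1 : ℚ[X])) ≠ 0 := by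
    intro h
    have := congrArg (fun p => Polynomial.coeff p 4) h
    simp [Polynomial.coeff_X_pow, Polynomial.coeff_one] at this
  apply normal_of_adjoin_rootSet (X^4 + 1)
  · intro x hx
    rw [Polynomial.mem_rootSet] at hx
    have hx4 : x^4 = -1 := by
      have := hx.2
      simp only [map_add, map_pow, aeval_X, map_one] at this
      linear_combination this
    have hfac : (x - ζ) * (x + ζ) * ((x - ζ^3) * (x + ζ^3)) = 0 := by
      linear_combination hx4 - x^2*ζ^2*hz4 + hz8
    have hζmem : ζ ∈ IntermediateField.adjoin ℚ ({ζ} : Set ℂ) :=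
      IntermediateField.subset_adjoin _ _ rfl
    set T := IntermediateField.adjoin ℚ ({ζ} : Set ℂ)
    rcases mul_eq_zero.1 hfac with h | h
    · rcases mul_eq_zero.1 h with h' | h'
      · rw [sub_eq_zero.1 h']; exact hζmem
      · rw [eq_neg_of_add_eq_zero_left h']; exact T.neg_mem hζmem
    · rcases mul_eq_zero.1 h with h' | h'
      · rw [sub_eq_zero.1 h']; exact T.pow_mem hζmem 3
      · rw [eq_neg_of_add_eq_zero_left h']; exact T.neg_mem (T.pow_mem hζmem 3)
  · intro x hx
    rcases hx with rfl
    apply IntermediateField.subset_adjoin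
    rw [Polynomial.mem_rootSet]
    refine ⟨hg, ?_⟩
    simp only [map_add, map_pow, aeval_X, map_one]
    linear_combination hz4

lemma normal_K {ζ α : ℂ} (hz8 : ζ^8 = 1) (hz4 : ζ^4 = -1) {s : ℚ} (hα : α^4 = -(s:ℂ)) :
    Normal ℚ ↥(IntermediateField.adjoin ℚ ({ζ, α} : Set ℂ)) := by
  have hg : ((X^4 + 1) * (X^4 + C s) : ℚ[X]) ≠ 0 := by
    apply mul_ne_zero
    · intro h
      have := congrArg (fun p => Polynomial.coeff p 4) h
      simp [Polynomial.coeff_X_pow, Polynomial.coeff_one] at this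
    · intro h
      have := congrArg (fun p => Polynomial.coeff p 4) h
      simp [Polynomial.coeff_X_pow, Polynomial.coeff_one, Polynomial.coeff_C] at this
  apply normal_of_adjoin_rootSet ((X^4 + 1) * (X^4 + C s))
  · intro x hx
    rw [Polynomial.mem_rootSet] at hx
    have hx2 := hx.2
    simp only [map_mul, map_add, map_pow, aeval_X, map_one, aeval_C, eq_ratCast] at hx2
    set T := IntermediateField.adjoin ℚ ({ζ, α} : Set ℂ)
    have hζmem : ζ ∈ T := IntermediateField.subset_adjoin _ _ (by left; rfl)
    have hαmem : α ∈ T := IntermediateField.subset_adjoin _ _ (by right; rfl)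
    rcases mul_eq_zero.1 hx2 with h4 | h4
    · have hx4 : x^4 = -1 := by linear_combination h4
      have hfac : (x - ζ) * (x + ζ) * ((x - ζ^3) * (x + ζ^3)) = 0 := by
        linear_combination hx4 - x^2*ζ^2*hz4 + hz8
      rcases mul_eq_zero.1 hfac with h | h
      · rcases mul_eq_zero.1 h with h' | h'
        · rw [sub_eq_zero.1 h']; exact hζmem
        · rw [eq_neg_of_add_eq_zero_left h']; exact T.neg_mem hζmem
      · rcases mul_eq_zero.1 h with h' | h'
        · rw [sub_eq_zero.1 h']; exact T.pow_mem hζmem 3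
        · rw [eq_neg_of_add_eq_zero_left h']; exact T.neg_mem (T.pow_mem hζmem 3)
    · have hx4 : x^4 = -(s:ℂ) := by linear_combination h4
      have hfac : (x - α) * (x + α) * ((x - ζ^2*α) * (x + ζ^2*α)) = 0 := by
        linear_combination hx4 + (α^4 - x^2*α^2)*hz4 - hα
      have hζ2α : ζ^2*α ∈ T := T.mul_mem (T.pow_mem hζmem 2) hαmem
      rcases mul_eq_zero.1 hfac with h | h
      · rcases mul_eq_zero.1 h with h' | h'
        · rw [sub_eq_zero.1 h']; exact hαmem
        · rw [eq_neg_of_add_eq_zero_left h']; exact T.neg_mem hαmem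
      · rcases mul_eq_zero.1 h with h' | h'
        · rw [sub_eq_zero.1 h']; exact hζ2α
        · rw [eq_neg_of_add_eq_zero_left h']; exact T.neg_mem hζ2α
  · intro x hx
    simp only [Set.mem_insert_iff, Set.mem_singleton_iff] at hx
    rcases hx with rfl | rfl
    · apply IntermediateField.subset_adjoin
      rw [Polynomial.mem_rootSet]
      refine ⟨hg, ?_⟩
      simp only [map_mul, map_add, map_pow, aeval_X, map_one, aeval_C, eq_ratCast]
      have h0 : x^4 + 1 = 0 := by linear_combination hz4
      rw [h0, zero_mul]
    · apply IntermediateField.subset_adjoin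
      rw [Polynomial.mem_rootSet]
      refine ⟨hg, ?_⟩
      simp only [map_mul, map_add, map_pow, aeval_X, map_one, aeval_C, eq_ratCast]
      have h0 : x^4 + (s:ℂ) = 0 := by linear_combination hα
      rw [h0, mul_zero]

lemma finrank_eight {ζ α : ℂ} (hζ : IsPrimitiveRoot ζ 8) (hαint : IsIntegral ℚ α)
    (t' : ℚ) (ht'0 : t' ≠ 0)
    (hα2 : α^2 = (t':ℂ)*ζ - t'*ζ^3 ∨ α^2 = (t':ℂ)*ζ + t'*ζ^3) :
    Module.finrank ℚ ↥(IntermediateField.adjoin ℚ ({ζ, α} : Set ℂ)) = 8 := by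
  have hζint := zeta8_int hζ
  set L := IntermediateField.adjoin ℚ ({ζ} : Set ℂ) with hL
  have hζL : ζ ∈ L := IntermediateField.subset_adjoin _ _ rfl
  have hα2L : α^2 ∈ L := by
    have hQ : ((t' : ℂ)) ∈ L := SubfieldClass.ratCast_mem L t'
    rcases hα2 with h | h <;> rw [h]
    · exact L.sub_mem (L.mul_mem hQ hζL) (L.mul_mem hQ (L.pow_mem hζL 3))
    · exact L.add_mem (L.mul_mem hQ hζL) (L.mul_mem hQ (L.pow_mem hζL 3))
  set β : ↥L := ⟨α^2, hα2L⟩ with hβ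
  have hnotin : α ∉ L := alpha_not_mem hζ t' ht'0 hα2
  have hirr : Irreducible (X^2 - C β : (↥L)[X]) := by
    apply X_pow_sub_C_irreducible_of_prime Nat.prime_two
    intro b hb
    apply hnotin
    have hb' : (↑b : ℂ)^2 = α^2 := by
      have := congrArg (fun x : ↥L => (x : ℂ)) hb
      push_cast at this
      simpa [hβ] using this
    have : ((↑b : ℂ) - α) * ((↑b : ℂ) + α) = 0 := by linear_combination hb'
    rcases mul_eq_zero.1 this with h | h
    · rw [← sub_eq_zero.1 h]; exact b.2
    · rw [← neg_eq_of_add_eq_zero_right h]; exact L.neg_mem b.2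
  have hmin : minpoly ↥L α = X^2 - C β := by
    refine (minpoly.eq_of_irreducible_of_monic hirr ?_ ?_).symm
    · simp [hβ]
    · exact monic_X_pow_sub_C β two_ne_zero
  have hαintL : IsIntegral ↥L α := hαint.tower_top
  have h2 : Module.finrank ↥L ↥(IntermediateField.adjoin ↥L ({α} : Set ℂ)) = 2 := by
    rw [IntermediateField.adjoin.finrank hαintL, hmin, natDegree_X_pow_sub_C]
  have h1 : Module.finrank ℚ ↥L = 4 := by
    rw [hL, IntermediateField.adjoin.finrank hζint, minpoly_zeta8_natDegree hζ]
  have hKM : (IntermediateField.adjoin ↥L ({α} : Set ℂ)).restrictScalars ℚ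
      = IntermediateField.adjoin ℚ ({ζ, α} : Set ℂ) := by
    rw [hL]
    exact (IntermediateField.adjoin_adjoin_left (F := ℚ) (S := {ζ}) {α}).trans (by rw [Set.singleton_union])
  haveI : Module.Free ↥L ↥(IntermediateField.adjoin ↥L ({α} : Set ℂ)) :=
    Module.Free.of_divisionRing ↥L ↥(IntermediateField.adjoin ↥L ({α} : Set ℂ))
  have htow : Module.finrank ℚ ↥L * Module.finrank ↥L ↥(IntermediateField.adjoin ↥L ({α} : Set ℂ))
      = Module.finrank ℚ ↥(IntermediateField.adjoin ↥L ({α} : Set ℂ)) :=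
    Module.finrank_mul_finrank ℚ ↥L ↥(IntermediateField.adjoin ↥L ({α} : Set ℂ))
  have : Module.finrank ℚ ↥(IntermediateField.adjoin ℚ ({ζ, α} : Set ℂ))
      = Module.finrank ℚ ↥(IntermediateField.adjoin ↥L ({α} : Set ℂ)) := by
    rw [← hKM]; rfl
  rw [this, ← htow, h1, h2]

lemma adjoin_pair_algebra_top {ζ α : ℂ} (hζint : IsIntegral ℚ ζ) (hαint : IsIntegral ℚ α) :
    Algebra.adjoin ℚ
      ({⟨ζ, IntermediateField.subset_adjoin ℚ {ζ, α} (by left; rfl)⟩,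
        ⟨α, IntermediateField.subset_adjoin ℚ {ζ, α} (by right; rfl)⟩} :
        Set ↥(IntermediateField.adjoin ℚ ({ζ, α} : Set ℂ))) = ⊤ := by
  set K := IntermediateField.adjoin ℚ ({ζ, α} : Set ℂ) with hK
  apply Subalgebra.map_injective (f := K.val) Subtype.val_injective
  erw [AlgHom.map_adjoin, Algebra.map_top]
  rw [IntermediateField.range_val]
  have himg : (K.val '' {⟨ζ, IntermediateField.subset_adjoin ℚ {ζ, α} (by left; rfl)⟩,
      ⟨α, IntermediateField.subset_adjoin ℚ {ζ, α} (by right; rfl)⟩}) = {ζ, α} := by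
    simp [Set.image_insert_eq]
  rw [himg]
  rw [hK, IntermediateField.adjoin_toSubalgebra_of_isAlgebraic]
  rintro x (rfl | rfl)
  · exact hζint.isAlgebraic
  · exact hαint.isAlgebraic

lemma algequiv_ext_pair {ζ α : ℂ} (hζint : IsIntegral ℚ ζ) (hαint : IsIntegral ℚ α)
    {f g : ↥(IntermediateField.adjoin ℚ ({ζ, α} : Set ℂ)) ≃ₐ[ℚ]
      ↥(IntermediateField.adjoin ℚ ({ζ, α} : Set ℂ))}
    (h1 : f ⟨ζ, IntermediateField.subset_adjoin ℚ {ζ, α} (by left; rfl)⟩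
        = g ⟨ζ, IntermediateField.subset_adjoin ℚ {ζ, α} (by left; rfl)⟩)
    (h2 : f ⟨α, IntermediateField.subset_adjoin ℚ {ζ, α} (by right; rfl)⟩
        = g ⟨α, IntermediateField.subset_adjoin ℚ {ζ, α} (by right; rfl)⟩) :
    f = g := by
  have hle := Algebra.adjoin_le (R := ℚ)
    (S := AlgHom.equalizer f.toAlgHom g.toAlgHom)
    (s := {⟨ζ, IntermediateField.subset_adjoin ℚ {ζ, α} (by left; rfl)⟩,
        ⟨α, IntermediateField.subset_adjoin ℚ {ζ, α} (by right; rfl)⟩})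
    (by rintro x (rfl | rfl); exact h1; exact h2)
  rw [adjoin_pair_algebra_top hζint hαint] at hle
  apply AlgEquiv.ext
  intro x
  exact hle (show x ∈ ⊤ by trivial)

lemma exists_sigma {ζ α : ℂ} (hζ : IsPrimitiveRoot ζ 8)
    [Normal ℚ ↥(IntermediateField.adjoin ℚ ({ζ, α} : Set ℂ))]
    [Normal ℚ ↥(IntermediateField.adjoin ℚ ({ζ} : Set ℂ))] :
    ∃ σ : ↥(IntermediateField.adjoin ℚ ({ζ, α} : Set ℂ)) ≃ₐ[ℚ]
        ↥(IntermediateField.adjoin ℚ ({ζ, α} : Set ℂ)),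
      σ ⟨ζ, IntermediateField.subset_adjoin ℚ {ζ, α} (by left; rfl)⟩
        = -⟨ζ, IntermediateField.subset_adjoin ℚ {ζ, α} (by left; rfl)⟩ := by
  have hζint := zeta8_int hζ
  have hz4 := zeta8_pow4 hζ
  set K := IntermediateField.adjoin ℚ ({ζ, α} : Set ℂ) with hKdef
  set L := IntermediateField.adjoin ℚ ({ζ} : Set ℂ) with hLdef
  have hLK : L ≤ K := by
    rw [hLdef, hKdef]
    apply IntermediateField.adjoin.mono
    intro x hx; left; exact hx
  letI : Algebra ↥L ↥K := (IntermediateField.inclusion hLK).toAlgebra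
  haveI : IsScalarTower ℚ ↥L ↥K := IsScalarTower.of_algebraMap_eq fun x => Subtype.ext rfl
  set ζgen : ↥L := IntermediateField.AdjoinSimple.gen ℚ ζ with hζgen
  set pb := IntermediateField.adjoin.powerBasis hζint with hpb
  have hroot : aeval (-ζgen) (minpoly ℚ pb.gen) = 0 := by
    rw [hpb, IntermediateField.adjoin.powerBasis_gen]
    erw [IntermediateField.minpoly_gen]
    have hcoe : algebraMap ↥L ℂ (aeval (-ζgen) (minpoly ℚ ζ))
        = aeval (-ζ) (minpoly ℚ ζ) := by
      rw [← Polynomial.aeval_algebraMap_apply]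
      norm_num [hζgen]
    have hv : aeval (-ζ) (minpoly ℚ ζ) = 0 := by
      have h5 : IsPrimitiveRoot (ζ^5) 8 := hζ.pow_of_coprime 5 (by norm_num)
      have hmeq : minpoly ℚ (ζ^5) = minpoly ℚ ζ := by
        rw [← Polynomial.cyclotomic_eq_minpoly_rat hζ (by norm_num),
          ← Polynomial.cyclotomic_eq_minpoly_rat h5 (by norm_num)]
      have : (ζ:ℂ)^5 = -ζ := by linear_combination ζ*hz4
      rw [← this, ← hmeq]
      exact minpoly.aeval ℚ (ζ^5)
    have := hcoe.trans hv
    exact (map_eq_zero_iff _ (algebraMap ↥L ℂ).injective).1 this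
  set φ : ↥L →ₐ[ℚ] ↥L := pb.lift (-ζgen) hroot with hφ
  set σ₀ : ↥L ≃ₐ[ℚ] ↥L := AlgEquiv.ofBijective φ (AlgHom.normal_bijective ℚ ↥L ↥L φ) with hσ₀
  have hσ₀ζ : σ₀ ζgen = -ζgen := by
    have : φ pb.gen = -ζgen := pb.lift_gen (-ζgen) hroot
    rw [hpb, IntermediateField.adjoin.powerBasis_gen] at this
    exact this
  obtain ⟨σ, hσ⟩ := AlgEquiv.restrictNormalHom_surjective (K₁ := ↥L) (E := ↥K) σ₀
  refine ⟨σ, ?_⟩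
  have hcomm := AlgEquiv.restrictNormal_commutes σ ↥L ζgen
  have hres : σ.restrictNormal ↥L = σ₀ := hσ
  rw [hres, hσ₀ζ] at hcomm
  have hmap : ∀ y : ↥L, algebraMap ↥L ↥K y
      = ⟨(y : ℂ), hLK y.2⟩ := fun y => rfl
  rw [map_neg] at hcomm
  exact hcomm.symm
theorem four_division_field_of_s_twice_square (s : ℤ) (hs : s ≠ 0)
    (hs4 : ∀ p : ℕ, p.Prime → ¬ ((p : ℤ) ^ 4 ∣ s))
    (ζ : ℂ) (hζ : IsPrimitiveRoot ζ 8) (α : ℂ) (hα : α ^ 4 = -(s : ℂ))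
    (t : ℤ) (ht : Squarefree t) (hst : s = 2 * t ^ 2 ∨ s = -(2 * t ^ 2)) :
    ¬ (∀ σ τ : IntermediateField.adjoin ℚ ({ζ, α} : Set ℂ) ≃ₐ[ℚ]
        IntermediateField.adjoin ℚ ({ζ, α} : Set ℂ), σ * τ = τ * σ) ∧
    Nonempty ((IntermediateField.adjoin ℚ ({ζ, α} : Set ℂ) ≃ₐ[ℚ]
        IntermediateField.adjoin ℚ ({ζ, α} : Set ℂ)) ≃* DihedralGroup 4) := by
  classical
  have hz8 : ζ^8 = 1 := hζ.pow_eq_one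
  have hz4 : ζ^4 = -1 := zeta8_pow4 hζ
  have hζint : IsIntegral ℚ ζ := zeta8_int hζ
  have hζne : ζ ≠ 0 := by
    intro h; rw [h] at hz8; norm_num at hz8
  have hαne : α ≠ 0 := by
    intro h
    rw [h] at hα
    have : (s:ℂ) = 0 := by linear_combination hα
    exact hs (by exact_mod_cast this)
  have hαint : IsIntegral ℚ α := by
    refine ⟨X^4 + C ((s:ℚ)), Polynomial.monic_X_pow_add_C _ (by norm_num), ?_⟩
    have : ((s:ℚ):ℂ) = (s:ℂ) := by push_cast; ring
    simp only [eval₂_add, eval₂_pow, eval₂_X, eval₂_C]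
    rw [show ((algebraMap ℚ ℂ) ((s:ℚ))) = ((s:ℚ):ℂ) from eq_ratCast _ _, this]
    linear_combination hα
  have htz : t ≠ 0 := by
    intro h0
    apply hs
    rcases hst with h | h <;> rw [h, h0] <;> ring
  -- express α² in terms of ζ
  obtain ⟨t', ht'0, hα2⟩ : ∃ t' : ℚ, t' ≠ 0 ∧
      (α^2 = (t':ℂ)*ζ - t'*ζ^3 ∨ α^2 = (t':ℂ)*ζ + t'*ζ^3) := by
    have hsqp : (ζ - ζ^3)^2 = 2 := by linear_combination (ζ^2 - 2)*hz4
    have hsqm : (ζ + ζ^3)^2 = -2 := by linear_combination (ζ^2 + 2)*hz4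
    rcases hst with hcase | hcase
    · -- s = 2t², α⁴ = -2t² = (t(ζ+ζ³))²
      have hsC : (s:ℂ) = 2*(t:ℂ)^2 := by exact_mod_cast congrArg (fun x : ℤ => (x:ℂ)) hcase
      have hfac : (α^2 - (t:ℂ)*(ζ + ζ^3)) * (α^2 + (t:ℂ)*(ζ + ζ^3)) = 0 := by
        linear_combination hα - hsC - (t:ℂ)^2 * hsqm
      rcases mul_eq_zero.1 hfac with h | h
      · refine ⟨(t:ℚ), by exact_mod_cast htz, Or.inr ?_⟩
        push_cast
        linear_combination h
      · refine ⟨-(t:ℚ), by simpa using htz, Or.inr ?_⟩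
        push_cast
        linear_combination h
    · -- s = -2t², α⁴ = 2t² = (t(ζ-ζ³))²
      have hsC : (s:ℂ) = -(2*(t:ℂ)^2) := by exact_mod_cast congrArg (fun x : ℤ => (x:ℂ)) hcase
      have hfac : (α^2 - (t:ℂ)*(ζ - ζ^3)) * (α^2 + (t:ℂ)*(ζ - ζ^3)) = 0 := by
        linear_combination hα - hsC - (t:ℂ)^2 * hsqp
      rcases mul_eq_zero.1 hfac with h | h
      · refine ⟨(t:ℚ), by exact_mod_cast htz, Or.inl ?_⟩
        push_cast
        linear_combination h
      · refine ⟨-(t:ℚ), by simpa using htz, Or.inl ?_⟩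
        push_cast
        linear_combination h
  -- the fields
  haveI hNK : Normal ℚ ↥(IntermediateField.adjoin ℚ ({ζ, α} : Set ℂ)) := by
    refine normal_K hz8 hz4 (s := (s:ℚ)) ?_
    push_cast
    exact hα
  haveI hNL : Normal ℚ ↥(IntermediateField.adjoin ℚ ({ζ} : Set ℂ)) := normal_L hz8 hz4
  haveI hfinSet : Finite ↥({ζ, α} : Set ℂ) :=
    Set.Finite.to_subtype ((Set.finite_singleton α).insert ζ)
  haveI hFD : FiniteDimensional ℚ ↥(IntermediateField.adjoin ℚ ({ζ, α} : Set ℂ)) := by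
    apply IntermediateField.finiteDimensional_adjoin
    rintro x (rfl | rfl)
    · exact hζint
    · exact hαint
  haveI hGal : IsGalois ℚ ↥(IntermediateField.adjoin ℚ ({ζ, α} : Set ℂ)) := ⟨⟩
  have hfin : Module.finrank ℚ ↥(IntermediateField.adjoin ℚ ({ζ, α} : Set ℂ)) = 8 :=
    finrank_eight hζ hαint t' ht'0 hα2
  have hcard : Fintype.card (↥(IntermediateField.adjoin ℚ ({ζ, α} : Set ℂ)) ≃ₐ[ℚ]
      ↥(IntermediateField.adjoin ℚ ({ζ, α} : Set ℂ))) = 8 := by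
    rw [← Nat.card_eq_fintype_card, IsGalois.card_aut_eq_finrank]; exact hfin
  -- elements
  set K := IntermediateField.adjoin ℚ ({ζ, α} : Set ℂ) with hKdef
  set ζK : ↥K := ⟨ζ, IntermediateField.subset_adjoin ℚ {ζ, α} (by left; rfl)⟩ with hζKdef
  set αK : ↥K := ⟨α, IntermediateField.subset_adjoin ℚ {ζ, α} (by right; rfl)⟩ with hαKdef
  have hζKne : ζK ≠ 0 := fun h => hζne (by have := congrArg Subtype.val h; exact this)
  have hαKne : αK ≠ 0 := fun h => hαne (by have := congrArg Subtype.val h; exact this)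
  have hζK4 : ζK^4 = -1 := by
    apply Subtype.ext; push_cast; exact hz4
  -- σ
  obtain ⟨σ, hσζ⟩ := exists_sigma (α := α) hζ
  -- τ : restriction of complex conjugation
  set τ : ↥K ≃ₐ[ℚ] ↥K :=
    AlgEquiv.restrictNormal (AlgEquiv.restrictScalars ℚ Complex.conjAe) ↥K with hτdef
  have hτcoe : ∀ x : ↥K, ((τ x : ℂ)) = (starRingEnd ℂ) ↑x := by
    intro x
    have := AlgEquiv.restrictNormal_commutes (AlgEquiv.restrictScalars ℚ Complex.conjAe) ↥K x
    exact this
  -- conj ζ = -ζ³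
  have hnormSq : (Complex.normSq ζ : ℝ) = 1 := by
    have h8 : (Complex.normSq ζ)^8 = 1 := by
      rw [← map_pow, hz8, map_one]
    have hge : (0:ℝ) ≤ Complex.normSq ζ := Complex.normSq_nonneg ζ
    rcases lt_trichotomy (Complex.normSq ζ) 1 with h | h | h
    · exfalso
      have := pow_lt_one₀ hge h (by norm_num : (8:ℕ) ≠ 0)
      rw [h8] at this; exact lt_irrefl _ this
    · exact h
    · exfalso
      have := one_lt_pow₀ h (by norm_num : (8:ℕ) ≠ 0)
      rw [h8] at this; exact lt_irrefl _ this
  have hconjζ : (starRingEnd ℂ) ζ = -ζ^3 := by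
    have h1 : ζ * (starRingEnd ℂ) ζ = 1 := by
      rw [Complex.mul_conj, hnormSq]; norm_num
    have h2 : ζ * (-ζ^3) = 1 := by linear_combination -hz4
    exact mul_left_cancel₀ hζne (h1.trans h2.symm)
  have hτζ : τ ζK = -ζK^3 := by
    apply Subtype.ext
    rw [hτcoe]
    push_cast
    exact hconjζ
  -- σ on αK
  have hσα2 : (σ αK)^2 = -(αK^2) := by
    have hαK2 : αK^2 = (algebraMap ℚ ↥K t') * ζK - (algebraMap ℚ ↥K t') * ζK^3 ∨
        αK^2 = (algebraMap ℚ ↥K t') * ζK + (algebraMap ℚ ↥K t') * ζK^3 := by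
      rcases hα2 with h | h
      · left; apply Subtype.ext; push_cast
        rw [show ((algebraMap ℚ ↥K t' : ↥K) : ℂ) = (t' : ℂ) from rfl]
        exact h
      · right; apply Subtype.ext; push_cast
        rw [show ((algebraMap ℚ ↥K t' : ↥K) : ℂ) = (t' : ℂ) from rfl]
        exact h
    rw [← map_pow]
    rcases hαK2 with h | h <;> rw [h] <;>
      simp only [map_sub, map_add, map_mul, map_pow, show σ ζK = -ζK from hσζ,
          show σ (algebraMap ℚ ↥K t') = algebraMap ℚ ↥K t' from σ.commutes t'] <;> ring
  obtain ⟨j, hj2, hσj, hτj, hσαj⟩ : ∃ j : ↥K, j^2 = -1 ∧ σ j = j ∧ τ j = -j ∧ σ αK = j * αK := by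
    have hτζK2 : τ (ζK^2) = -ζK^2 := by
      apply Subtype.ext
      rw [hτcoe]
      push_cast
      rw [map_pow, hconjζ]
      linear_combination ζ^2*hz4
    have hσζK2 : σ (ζK^2) = ζK^2 := by rw [map_pow, hσζ]; ring
    have hζK2sq : (ζK^2)^2 = -1 := by rw [← pow_mul]; exact hζK4
    have hfac : (σ αK - ζK^2 * αK) * (σ αK + ζK^2 * αK) = 0 := by
      linear_combination hσα2 - αK^2 * hζK4
    rcases mul_eq_zero.1 hfac with h | h
    · exact ⟨ζK^2, hζK2sq, hσζK2, hτζK2, sub_eq_zero.1 h⟩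
    · refine ⟨-ζK^2, by rw [neg_pow]; simpa using hζK2sq, by rw [map_neg, hσζK2],
        by rw [map_neg, hτζK2, neg_neg], ?_⟩
      rw [eq_neg_of_add_eq_zero_left h]; ring
  -- τ on αK
  obtain ⟨u, hτα, hσu⟩ : ∃ u : ↥K, τ αK = u * αK ∧ σ u = u := by
    set w := (starRingEnd ℂ) α with hw
    have hw4 : w^4 = α^4 := by
      rw [hw, ← map_pow, hα]
      simp
    have hfac : ((w - α) * (w + α)) * ((w - ζ^2*α) * (w + ζ^2*α)) = 0 := by
      linear_combination hw4 + (α^4 - w^2*α^2)*hz4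
    have hταval : ∀ u : ↥K, (u : ℂ) * α = w → τ αK = u * αK := by
      intro u hu
      apply Subtype.ext
      rw [hτcoe]
      push_cast
      rw [← hw, ← hu]
    rcases mul_eq_zero.1 hfac with h | h
    · rcases mul_eq_zero.1 h with h' | h'
      · exact ⟨1, hταval 1 (by rw [sub_eq_zero.1 h']; push_cast; ring), map_one σ⟩
      · refine ⟨-1, hταval (-1) ?_, by rw [map_neg, map_one]⟩
        rw [eq_neg_of_add_eq_zero_left h']
        push_cast; ring
    · rcases mul_eq_zero.1 h with h' | h'
      · refine ⟨ζK^2, hταval (ζK^2) ?_, by rw [map_pow, hσζ]; ring⟩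
        rw [sub_eq_zero.1 h']
        push_cast; ring
      · refine ⟨-ζK^2, hταval (-ζK^2) ?_, by rw [map_neg, map_pow, hσζ]; ring⟩
        rw [eq_neg_of_add_eq_zero_left h']
        push_cast; ring
  -- relations
  have hτ2 : τ * τ = 1 := by
    apply AlgEquiv.ext
    intro x
    apply Subtype.ext
    rw [AlgEquiv.mul_apply, hτcoe, hτcoe, Complex.conj_conj, AlgEquiv.one_apply]
  have hσσζ : σ (σ ζK) = ζK := by rw [hσζ, map_neg, hσζ, neg_neg]
  have hσσα : σ (σ αK) = -αK := by
    rw [hσαj, map_mul, hσj, hσαj]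
    linear_combination αK * hj2
  have hσ4 : σ^4 = 1 := by
    apply algequiv_ext_pair hζint hαint
    · show (σ^4) ζK = (1 : ↥K ≃ₐ[ℚ] ↥K) ζK
      have h1 : σ (σ (σ (σ ζK))) = ζK := by rw [hσσζ, hσσζ]
      rw [AlgEquiv.one_apply]
      calc (σ^4) ζK = σ (σ (σ (σ ζK))) := by
            rw [show σ^4 = σ*σ*σ*σ from by rw [pow_succ, pow_succ, pow_succ, pow_one]]
            rfl
        _ = ζK := h1
    · show (σ^4) αK = (1 : ↥K ≃ₐ[ℚ] ↥K) αK
      have h1 : σ (σ (σ (σ αK))) = αK := by rw [hσσα, map_neg, map_neg, hσσα, neg_neg]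
      rw [AlgEquiv.one_apply]
      calc (σ^4) αK = σ (σ (σ (σ αK))) := by
            rw [show σ^4 = σ*σ*σ*σ from by rw [pow_succ, pow_succ, pow_succ, pow_one]]
            rfl
        _ = αK := h1
  have hσ2ne : σ^2 ≠ 1 := by
    intro h
    have := congrArg (fun e : ↥K ≃ₐ[ℚ] ↥K => e αK) h
    simp only [pow_two, AlgEquiv.mul_apply, AlgEquiv.one_apply] at this
    rw [hσσα] at this
    have h20 : (2 : ↥K) * αK = 0 := by linear_combination -this
    rcases mul_eq_zero.1 h20 with h' | h'
    · exact two_ne_zero h'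
    · exact hαKne h'
  have hrel : σ * τ * σ = τ := by
    apply algequiv_ext_pair hζint hαint
    · show σ (τ (σ ζK)) = τ ζK
      rw [hσζ, map_neg, hτζ, neg_neg, map_pow, hσζ]
      ring
    · show σ (τ (σ αK)) = τ αK
      rw [hσαj, map_mul, hτj, hτα, map_mul, map_neg, hσj, map_mul, hσu, hσαj]
      linear_combination (-u * αK) * hj2
  -- order of σ
  haveI : Fact (Nat.Prime 2) := ⟨Nat.prime_two⟩
  have hord : orderOf σ = 4 := by
    have h : orderOf σ = 2^(1+1) :=
      orderOf_eq_prime_pow (by simpa using hσ2ne) (by simpa using hσ4)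
    rw [h]; norm_num
  have hpowmod : ∀ m n : ℕ, ((m : ZMod 4) = (n : ZMod 4)) → σ^m = σ^n := by
    intro m n h
    rw [pow_eq_pow_iff_modEq, hord]
    exact (ZMod.natCast_eq_natCast_iff _ _ _).1 h
  have hστ3 : σ * τ = τ * σ^3 := by
    calc σ * τ = σ * τ * (σ * σ^3) := by
          rw [show σ * σ^3 = σ^4 from (pow_succ' σ 3).symm, hσ4, mul_one]
      _ = σ * τ * σ * σ^3 := by rw [mul_assoc (σ * τ)]
      _ = τ * σ^3 := by rw [hrel]
  have hpowτ : ∀ n : ℕ, σ^n * τ = τ * σ^(3*n) := by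
    intro n
    induction n with
    | zero => simp
    | succ n ih =>
      calc σ^(n+1) * τ = σ^n * (σ * τ) := by rw [pow_succ, mul_assoc]
        _ = σ^n * τ * σ^3 := by rw [hστ3, ← mul_assoc]
        _ = τ * σ^(3*n) * σ^3 := by rw [ih]
        _ = τ * σ^(3*(n+1)) := by
            rw [mul_assoc, ← pow_add, show 3*n+3 = 3*(n+1) from by ring]
  -- powers of σ on ζK
  have hσpowζ : ∀ n : ℕ, (σ^n) ζK = ζK ∨ (σ^n) ζK = -ζK := by
    intro n
    induction n with
    | zero => left; simp
    | succ n ih =>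
      have : (σ^(n+1)) ζK = σ ((σ^n) ζK) := by
        rw [pow_succ']
        rfl
      rcases ih with h | h
      · right; rw [this, h, hσζ]
      · left; rw [this, h, map_neg, hσζ, neg_neg]
  have hζ2ne : ζ^2 ≠ 1 := hζ.pow_ne_one_of_pos_of_lt (by norm_num) (by norm_num)
  have hζ4ne : ζ^4 ≠ 1 := hζ.pow_ne_one_of_pos_of_lt (by norm_num) (by norm_num)
  have hτσpow_ne : ∀ n : ℕ, τ * σ^n ≠ 1 := by
    intro n h
    have happ := congrArg (fun e : ↥K ≃ₐ[ℚ] ↥K => e ζK) h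
    simp only [AlgEquiv.mul_apply, AlgEquiv.one_apply] at happ
    rcases hσpowζ n with h' | h'
    · rw [h', hτζ] at happ
      have hc : -ζ^3 = ζ := by simpa using congrArg Subtype.val happ
      exact hζ2ne (by linear_combination -ζ*hc - hz4)
    · rw [h', map_neg, hτζ, neg_neg] at happ
      have hc : ζ^3 = ζ := by simpa using congrArg Subtype.val happ
      exact hζ2ne (mul_left_cancel₀ hζne (by linear_combination hc : ζ * ζ^2 = ζ * 1))
  -- the dihedral group homomorphism
  set Fmap : DihedralGroup 4 → (↥K ≃ₐ[ℚ] ↥K) := fun x =>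
    match x with
    | DihedralGroup.r i => σ^(i.val)
    | DihedralGroup.sr i => τ * σ^(i.val)
    with hFmap
  have h40 : ((4 : ℕ) : ZMod 4) = 0 := by decide
  have hFmul : ∀ x y : DihedralGroup 4, Fmap (x * y) = Fmap x * Fmap y := by
    rintro (i | i) (j | j)
    · rw [DihedralGroup.r_mul_r]
      show σ^((i+j).val) = σ^(i.val) * σ^(j.val)
      rw [← pow_add]
      apply hpowmod
      push_cast [ZMod.natCast_val, ZMod.cast_id]
      ring
    · rw [DihedralGroup.r_mul_sr]
      show τ * σ^((j-i).val) = σ^(i.val) * (τ * σ^(j.val))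
      rw [← mul_assoc, hpowτ, mul_assoc, ← pow_add]
      congr 1
      apply hpowmod
      push_cast [ZMod.natCast_val, ZMod.cast_id]
      linear_combination (-(i : ZMod 4)) * h40
    · rw [DihedralGroup.sr_mul_r]
      show τ * σ^((i+j).val) = (τ * σ^(i.val)) * σ^(j.val)
      rw [mul_assoc, ← pow_add]
      congr 1
      apply hpowmod
      push_cast [ZMod.natCast_val, ZMod.cast_id]
      ring
    · rw [DihedralGroup.sr_mul_sr]
      show σ^((j-i).val) = (τ * σ^(i.val)) * (τ * σ^(j.val))
      have hassoc : (τ * σ^(i.val)) * (τ * σ^(j.val)) = τ * (σ^(i.val) * τ) * σ^(j.val) := by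
        simp only [mul_assoc]
      rw [hassoc, hpowτ, show τ * (τ * σ^(3*i.val)) * σ^(j.val)
          = (τ*τ) * (σ^(3*i.val) * σ^(j.val)) from by simp only [mul_assoc], hτ2, one_mul,
        ← pow_add]
      apply hpowmod
      push_cast [ZMod.natCast_val, ZMod.cast_id]
      linear_combination (-(i : ZMod 4)) * h40
  set Fhom : DihedralGroup 4 →* (↥K ≃ₐ[ℚ] ↥K) := MonoidHom.mk' Fmap hFmul with hFhom
  have hinj : Function.Injective Fhom := by
    rw [injective_iff_map_eq_one]
    rintro (i | i) h
    · have h' : σ^(i.val) = 1 := h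
      have hdvd := orderOf_dvd_of_pow_eq_one h'
      rw [hord] at hdvd
      have hlt : i.val < 4 := ZMod.val_lt i
      have : i.val = 0 := Nat.eq_zero_of_dvd_of_lt hdvd hlt
      have : i = 0 := by
        have := (ZMod.val_eq_zero i).1 this
        exact this
      rw [this, DihedralGroup.one_def]
    · exact absurd h (hτσpow_ne i.val)
  have hbij : Function.Bijective Fhom := by
    rw [Fintype.bijective_iff_injective_and_card]
    exact ⟨hinj, by rw [DihedralGroup.card, hcard]⟩

  constructor
  · intro hcomm
    have h1 := hcomm σ τ
    rw [h1] at hrel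
    have h2 : τ * σ^2 = τ * 1 := by
      rw [mul_one]
      calc τ * σ^2 = τ * σ * σ := by rw [pow_two, ← mul_assoc]
        _ = τ := hrel
    have := mul_left_cancel h2
    exact hσ2ne this
  · exact ⟨(MulEquiv.ofBijective Fhom hbij).symm⟩
end

section
/- Let p > 3 be a prime and let δ be a unit of ℤ/pℤ. Let G be the subgroup of GL(2, ℤ/pℤ) generated by the matrix [[−1,0],[0,1]] together with the set of cubes {g³ : g ∈ C_{δ,0}(p)} of elements of the Cartan subgroup C_{δ,0}(p). Then G is not abelian. -/
theorem cartan_cubes_with_ceps_nonabelian (p : ℕ) (hp : p.Prime) (hp3 : 3 < p)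
    (δ : ZMod p) (hδ : IsUnit δ) :
    ¬ (∀ x ∈ Subgroup.closure
          ({g : GL (Fin 2) (ZMod p) |
              (g : Matrix (Fin 2) (Fin 2) (ZMod p)) = !![-1, 0; 0, 1]} ∪
            {x | ∃ g ∈ cartanSet p δ 0, x = g ^ 3}),
        ∀ y ∈ Subgroup.closure
          ({g : GL (Fin 2) (ZMod p) |
              (g : Matrix (Fin 2) (Fin 2) (ZMod p)) = !![-1, 0; 0, 1]} ∪
            {x | ∃ g ∈ cartanSet p δ 0, x = g ^ 3}),
        x * y = y * x) := by
  intro H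
  haveI : Fact p.Prime := ⟨hp⟩
  set M : Matrix (Fin 2) (Fin 2) (ZMod p) := !![0, 1; δ, 0] with hMdef
  set E : Matrix (Fin 2) (Fin 2) (ZMod p) := !![-1, 0; 0, 1] with hEdef
  have hMdet : IsUnit M.det := by
    have : M.det = -δ := by simp [hMdef, Matrix.det_fin_two_of]
    rw [this]; exact hδ.neg
  have hEdet : IsUnit E.det := by
    have : E.det = -1 := by simp [hEdef, Matrix.det_fin_two_of]
    rw [this]; exact isUnit_one.neg
  have hM : IsUnit M := (Matrix.isUnit_iff_isUnit_det M).mpr hMdet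
  have hE : IsUnit E := (Matrix.isUnit_iff_isUnit_det E).mpr hEdet
  let g : GL (Fin 2) (ZMod p) := hM.unit
  let e : GL (Fin 2) (ZMod p) := hE.unit
  have hgval : (g : Matrix (Fin 2) (Fin 2) (ZMod p)) = M := hM.unit_spec
  have heval : (e : Matrix (Fin 2) (Fin 2) (ZMod p)) = E := hE.unit_spec
  have he : e ∈ Subgroup.closure
      ({g : GL (Fin 2) (ZMod p) |
          (g : Matrix (Fin 2) (Fin 2) (ZMod p)) = !![-1, 0; 0, 1]} ∪
        {x | ∃ g ∈ cartanSet p δ 0, x = g ^ 3}) :=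
    Subgroup.subset_closure (Or.inl heval)
  have hx : g ^ 3 ∈ Subgroup.closure
      ({g : GL (Fin 2) (ZMod p) |
          (g : Matrix (Fin 2) (Fin 2) (ZMod p)) = !![-1, 0; 0, 1]} ∪
        {x | ∃ g ∈ cartanSet p δ 0, x = g ^ 3}) := by
    refine Subgroup.subset_closure (Or.inr ⟨g, ⟨0, 1, ?_⟩, rfl⟩)
    rw [hgval]
    simp [hMdef, cMat]
  have key := H e he (g ^ 3) hx
  have hmat : E * M ^ 3 = M ^ 3 * E := by
    have := congrArg (Units.val) key
    simpa [Units.val_pow_eq_pow_val, hgval, heval] using this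
  have hM3 : M ^ 3 = !![0, δ; δ * δ, 0] := by
    have h2 : M ^ 2 = !![δ, 0; 0, δ] := by
      rw [pow_two, hMdef]
      simp [Matrix.mul_fin_two]
    rw [pow_succ, h2, hMdef]
    simp [Matrix.mul_fin_two]
  rw [hM3, hEdef] at hmat
  have hentry := congrFun (congrFun hmat 0) 1
  simp [Matrix.mul_fin_two] at hentry
  -- hentry : -δ = δ
  have h2δ : (2 : ZMod p) * δ = 0 := by linear_combination -hentry
  have h2 : (2 : ZMod p) ≠ 0 := by
    have : ((2 : ℕ) : ZMod p) ≠ 0 := by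
      rw [Ne, ZMod.natCast_eq_zero_iff]
      intro h
      have := Nat.le_of_dvd (by norm_num) h
      omega
    simpa using this
  have := mul_eq_zero.mp h2δ
  rcases this with h | h
  · exact h2 h
  · exact hδ.ne_zero h
end

section
/- Let ε ∈ {1,−1} and let H be the set of matrices [[a, b],[6b, a]] over ℤ/9ℤ such that a is a unit of ℤ/9ℤ and b is divisible by 3 in ℤ/9ℤ (note 6 = −3·4⁻¹ in ℤ/9ℤ). Then the subgroup of GL(2, ℤ/9ℤ) generated by the matrix [[−ε,0],[0,ε]] together with H is not abelian. -/
theorem mod_nine_image_nonabelian (ε : ZMod 9) (hε : ε = 1 ∨ ε = -1) :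
    ¬ (∀ x ∈ Subgroup.closure
          ({g : GL (Fin 2) (ZMod 9) |
              (g : Matrix (Fin 2) (Fin 2) (ZMod 9)) = !![-ε, 0; 0, ε]} ∪
            {g | ∃ a b : ZMod 9, IsUnit a ∧ (∃ c : ZMod 9, b = 3 * c) ∧
              (g : Matrix (Fin 2) (Fin 2) (ZMod 9)) = !![a, b; 6 * b, a]}),
        ∀ y ∈ Subgroup.closure
          ({g : GL (Fin 2) (ZMod 9) |
              (g : Matrix (Fin 2) (Fin 2) (ZMod 9)) = !![-ε, 0; 0, ε]} ∪
            {g | ∃ a b : ZMod 9, IsUnit a ∧ (∃ c : ZMod 9, b = 3 * c) ∧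
              (g : Matrix (Fin 2) (Fin 2) (ZMod 9)) = !![a, b; 6 * b, a]}),
        x * y = y * x) := by
  intro h
  have hdc : IsUnit (!![-ε, 0; 0, ε]).det := by
    rcases hε with rfl | rfl <;> · rw [Matrix.det_fin_two]; decide
  have hdm : IsUnit (!![(1 : ZMod 9), 3; 6 * 3, 1]).det := by
    rw [Matrix.det_fin_two]; decide
  set x : GL (Fin 2) (ZMod 9) := Matrix.nonsingInvUnit _ hdc with hx
  set y : GL (Fin 2) (ZMod 9) := Matrix.nonsingInvUnit _ hdm with hy
  have hxc : (x : Matrix (Fin 2) (Fin 2) (ZMod 9)) = !![-ε, 0; 0, ε] := rfl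
  have hyc : (y : Matrix (Fin 2) (Fin 2) (ZMod 9)) = !![(1 : ZMod 9), 3; 6 * 3, 1] := rfl
  have hxmem := Subgroup.subset_closure (G := GL (Fin 2) (ZMod 9))
    (k := ({g : GL (Fin 2) (ZMod 9) |
              (g : Matrix (Fin 2) (Fin 2) (ZMod 9)) = !![-ε, 0; 0, ε]} ∪
            {g | ∃ a b : ZMod 9, IsUnit a ∧ (∃ c : ZMod 9, b = 3 * c) ∧
              (g : Matrix (Fin 2) (Fin 2) (ZMod 9)) = !![a, b; 6 * b, a]}))
    (Or.inl hxc)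
  have hymem := Subgroup.subset_closure (G := GL (Fin 2) (ZMod 9))
    (k := ({g : GL (Fin 2) (ZMod 9) |
              (g : Matrix (Fin 2) (Fin 2) (ZMod 9)) = !![-ε, 0; 0, ε]} ∪
            {g | ∃ a b : ZMod 9, IsUnit a ∧ (∃ c : ZMod 9, b = 3 * c) ∧
              (g : Matrix (Fin 2) (Fin 2) (ZMod 9)) = !![a, b; 6 * b, a]}))
    (Or.inr ⟨1, 3, isUnit_one, ⟨1, by norm_num⟩, hyc⟩)
  have hcomm := h x hxmem y hymem
  have hmat : (x : Matrix (Fin 2) (Fin 2) (ZMod 9)) * y = (y : Matrix (Fin 2) (Fin 2) (ZMod 9)) * x := by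
    have := congrArg (Units.val) hcomm
    simpa using this
  rw [hxc, hyc] at hmat
  have h01 := congrFun (congrFun hmat 0) 1
  simp [Matrix.mul_apply, Fin.sum_univ_two] at h01
  rcases hε with rfl | rfl <;> revert h01 <;> decide
end

section
/- Let γ'' be any matrix in GL(2, ℤ/8ℤ) that belongs to the group N_{−1,0}(8) and whose reduction modulo 4 equals one of the four matrices [[1,0],[0,−1]], [[−1,0],[0,1]], [[0,1],[1,0]], [[0,−1],[−1,0]] over ℤ/4ℤ. Then the subgroup of GL(2, ℤ/8ℤ) generated by γ'', the matrix −Id = [[−1,0],[0,−1]], the matrix 3·Id = [[3,0],[0,3]], and the matrix [[1,2],[−2,1]] is not abelian. -/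
/-- Entrywise reduction of a matrix mod 8 to a matrix mod 4. -/
def redMod4 (M : Matrix (Fin 2) (Fin 2) (ZMod 8)) : Matrix (Fin 2) (Fin 2) (ZMod 4) :=
  M.map (ZMod.castHom (show 4 ∣ 8 by norm_num) (ZMod 4))

abbrev M2aux := Matrix (Fin 2) (Fin 2) (ZMod 8)

def goodP (M : M2aux) : Prop :=
  (M 1 0 = -M 0 1 ∧ M 1 1 = M 0 0) ∨ (M 1 0 = M 0 1 ∧ M 1 1 = -M 0 0)

lemma goodP_mul {M N : M2aux} (hM : goodP M) (hN : goodP N) : goodP (M * N) := by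
  simp only [goodP, Matrix.mul_apply, Fin.sum_univ_two] at *
  rcases hM with ⟨h1,h2⟩|⟨h1,h2⟩ <;> rcases hN with ⟨h3,h4⟩|⟨h3,h4⟩
  · left; constructor <;> (simp only [h1,h2,h3,h4]; ring)
  · right; constructor <;> (simp only [h1,h2,h3,h4]; ring)
  · right; constructor <;> (simp only [h1,h2,h3,h4]; ring)
  · left; constructor <;> (simp only [h1,h2,h3,h4]; ring)

lemma goodP_inv (g : GL (Fin 2) (ZMod 8)) (h : goodP ↑g) : goodP ↑(g⁻¹) := by
  have e : (↑(g⁻¹) : M2aux) = (↑g : M2aux)⁻¹ := Matrix.coe_units_inv g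
  rw [goodP, e, Matrix.inv_def, Matrix.adjugate_fin_two]
  rcases h with ⟨h1,h2⟩|⟨h1,h2⟩
  · left; simp only [h1,h2]; constructor <;> simp
  · right; simp only [h1,h2]; constructor <;> simp

lemma goodP_of_mem {g : GL (Fin 2) (ZMod 8)} (h : g ∈ normalizerGroup 8 (-1) 0) :
    goodP ↑g := by
  rw [normalizerGroup] at h
  refine Subgroup.closure_induction (p := fun (x : GL (Fin 2) (ZMod 8)) _ => goodP (x : M2aux)) ?_ ?_ ?_ ?_ h
  · rintro x (⟨a, b, hab⟩ | hx)
    · rw [hab]; left; simp [cMat]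
    · rw [Set.mem_setOf_eq] at hx
      rw [hx]; right; simp
  · left; simp
  · intro x y _ _ hx hy
    exact goodP_mul hx hy
  · intro x _ hx; exact goodP_inv x hx

def Amat : M2aux := !![1, 2; -2, 1]

def Agl : GL (Fin 2) (ZMod 8) :=
  ⟨Amat, !![5, 6; 2, 5], by decide, by decide⟩

theorem mod_eight_image_nonabelian (γ'' : GL (Fin 2) (ZMod 8))
    (hmem : γ'' ∈ normalizerGroup 8 (-1) 0)
    (hred : redMod4 (γ'' : Matrix (Fin 2) (Fin 2) (ZMod 8)) = !![1, 0; 0, -1] ∨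
      redMod4 (γ'' : Matrix (Fin 2) (Fin 2) (ZMod 8)) = !![-1, 0; 0, 1] ∨
      redMod4 (γ'' : Matrix (Fin 2) (Fin 2) (ZMod 8)) = !![0, 1; 1, 0] ∨
      redMod4 (γ'' : Matrix (Fin 2) (Fin 2) (ZMod 8)) = !![0, -1; -1, 0]) :
    ¬ (∀ x ∈ Subgroup.closure
          ({γ''} ∪
            {g : GL (Fin 2) (ZMod 8) |
              (g : Matrix (Fin 2) (Fin 2) (ZMod 8)) = !![-1, 0; 0, -1] ∨
              (g : Matrix (Fin 2) (Fin 2) (ZMod 8)) = !![3, 0; 0, 3] ∨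
              (g : Matrix (Fin 2) (Fin 2) (ZMod 8)) = !![1, 2; -2, 1]}),
        ∀ y ∈ Subgroup.closure
          ({γ''} ∪
            {g : GL (Fin 2) (ZMod 8) |
              (g : Matrix (Fin 2) (Fin 2) (ZMod 8)) = !![-1, 0; 0, -1] ∨
              (g : Matrix (Fin 2) (Fin 2) (ZMod 8)) = !![3, 0; 0, 3] ∨
              (g : Matrix (Fin 2) (Fin 2) (ZMod 8)) = !![1, 2; -2, 1]}),
        x * y = y * x) := by
  intro hcomm
  set M : M2aux := (γ'' : M2aux) with hMdef
  -- γ'' is in the nontrivial coset: M = [[a,b],[b,-a]]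
  have hgood := goodP_of_mem hmem
  rw [← hMdef] at hgood
  have hform : M 1 0 = M 0 1 ∧ M 1 1 = -M 0 0 := by
    rcases hgood with ⟨h1, h2⟩ | h2
    · -- first coset is ruled out by the mod 4 reduction
      exfalso
      have e : ∀ i j, redMod4 M i j =
          (ZMod.castHom (show 4 ∣ 8 by norm_num) (ZMod 4)) (M i j) := fun i j => rfl
      rcases hred with hr | hr | hr | hr
      · have a := congrFun (congrFun hr 0) 0
        have b := congrFun (congrFun hr 1) 1
        rw [e, h2] at b; rw [e] at a
        rw [a] at b; revert b; decide
      · have a := congrFun (congrFun hr 0) 0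
        have b := congrFun (congrFun hr 1) 1
        rw [e, h2] at b; rw [e] at a
        rw [a] at b; revert b; decide
      · have a := congrFun (congrFun hr 0) 1
        have b := congrFun (congrFun hr 1) 0
        rw [e, h1, map_neg] at b; rw [e] at a
        rw [a] at b; revert b; decide
      · have a := congrFun (congrFun hr 0) 1
        have b := congrFun (congrFun hr 1) 0
        rw [e, h1, map_neg] at b; rw [e] at a
        rw [a] at b; revert b; decide
    · exact h2
  -- Agl is in the closure
  have hAmem : Agl ∈ Subgroup.closure
      ({γ''} ∪
        {g : GL (Fin 2) (ZMod 8) |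
          (g : Matrix (Fin 2) (Fin 2) (ZMod 8)) = !![-1, 0; 0, -1] ∨
          (g : Matrix (Fin 2) (Fin 2) (ZMod 8)) = !![3, 0; 0, 3] ∨
          (g : Matrix (Fin 2) (Fin 2) (ZMod 8)) = !![1, 2; -2, 1]}) := by
    apply Subgroup.subset_closure
    right
    right; right
    rfl
  have hγmem : γ'' ∈ Subgroup.closure
      ({γ''} ∪
        {g : GL (Fin 2) (ZMod 8) |
          (g : Matrix (Fin 2) (Fin 2) (ZMod 8)) = !![-1, 0; 0, -1] ∨
          (g : Matrix (Fin 2) (Fin 2) (ZMod 8)) = !![3, 0; 0, 3] ∨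
          (g : Matrix (Fin 2) (Fin 2) (ZMod 8)) = !![1, 2; -2, 1]}) := by
    apply Subgroup.subset_closure
    left; rfl
  have hc := hcomm γ'' hγmem Agl hAmem
  have hcM : M * Amat = Amat * M := congrArg Units.val hc
  -- extract entry equations
  have e01 : (M * Amat) 0 0 = (Amat * M) 0 0 := by rw [hcM]
  have e00 : (M * Amat) 0 1 = (Amat * M) 0 1 := by rw [hcM]
  have hb : (4 : ZMod 8) * M 0 1 = 0 := by
    have := e01
    simp only [Matrix.mul_apply, Fin.sum_univ_two, Amat, hform.1] at this
    have h2 : M 0 0 * !![(1:ZMod 8),2;-2,1] 0 0 + M 0 1 * !![(1:ZMod 8),2;-2,1] 1 0 =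
        !![(1:ZMod 8),2;-2,1] 0 0 * M 0 0 + !![(1:ZMod 8),2;-2,1] 0 1 * M 0 1 := this
    simp at h2
    linear_combination -h2
  have ha : (4 : ZMod 8) * M 0 0 = 0 := by
    have := e00
    simp only [Matrix.mul_apply, Fin.sum_univ_two, Amat, hform.2] at this
    have h2 : M 0 0 * !![(1:ZMod 8),2;-2,1] 0 1 + M 0 1 * !![(1:ZMod 8),2;-2,1] 1 1 =
        !![(1:ZMod 8),2;-2,1] 0 0 * M 0 1 + !![(1:ZMod 8),2;-2,1] 0 1 * (-(M 0 0)) := this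
    simp at h2
    linear_combination h2
  -- determinant of M is then 0, contradicting invertibility
  have hunit : M * (↑(γ''⁻¹) : M2aux) = 1 := by
    rw [hMdef, ← Units.val_mul, mul_inv_cancel]; rfl
  have hdet1 : M.det * (↑(γ''⁻¹) : M2aux).det = 1 := by
    rw [← Matrix.det_mul, hunit, Matrix.det_one]
  rw [Matrix.det_fin_two, hform.1, hform.2] at hdet1
  have key : ∀ a b d : ZMod 8, 4 * a = 0 → 4 * b = 0 → (a * -a - b * b) * d ≠ 1 := by decide
  exact key _ _ _ ha hb hdet1
end
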